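/- arXiv:0911.0286 — 3 statements merged into one kernel-verified Lean document; each statement's English description precedes it below -/
import Mathlib

section
/- Let F(x) ∈ 𝓞[x] be a monic irreducible polynomial of degree n with root θ ∈ K̄, of depth r, and let m_1 < ⋯ < m_r < n be its Okutsu degrees. Let F_1(x), …, F_r(x) ∈ 𝓞[x] be monic polynomials with deg F_i = m_i for all 1 ≤ i ≤ r. Then [F_1, …, F_r] is an Okutsu frame of F if and only if each F_i(x) is a divisor polynomial of F of degree m_i. -/
open Polynomial

noncomputable section

/-- A local field `K` of characteristic zero, presented through the canonical extension `v`
of its normalized discrete valuation (additively written, `v(K*) = ℤ`) to a fixed algebraic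
closure of `K`.  The axioms state that `v` is an additive valuation on the algebraic closure,
that its restriction to `K` is a surjective discrete valuation onto `ℤ` (plus `⊤` at `0`),
that it is invariant under `K`-automorphisms (a property of the canonical extension), that
`K` is complete and that its residue field is finite. -/
structure OkutsuSetup (K : Type) [Field K] [CharZero K] : Type where
  v : AlgebraicClosure K → WithTop ℚ
  v_eq_top_iff : ∀ x, v x = ⊤ ↔ x = 0
  v_mul : ∀ x y, v (x * y) = v x + v y
  v_min_le_add : ∀ x y, min (v x) (v y) ≤ v (x + y)
  v_neg : ∀ x, v (-x) = v x
  v_one : v 1 = 0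
  v_base_int : ∀ x : K, x ≠ 0 →
    ∃ k : ℤ, v (algebraMap K (AlgebraicClosure K) x) = ((k : ℚ) : WithTop ℚ)
  v_base_one : ∃ x : K, v (algebraMap K (AlgebraicClosure K) x) = ((1 : ℚ) : WithTop ℚ)
  v_aut_invariant : ∀ (M : IntermediateField K (AlgebraicClosure K)) (σ : ↥M ≃ₐ[K] ↥M)
    (x : ↥M), v ((σ x : ↥M) : AlgebraicClosure K) = v ((x : ↥M) : AlgebraicClosure K)
  complete : ∀ a : ℕ → K,
    (∀ N : ℚ, ∃ M : ℕ, ∀ p q : ℕ, M ≤ p → M ≤ q →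
      ((N : ℚ) : WithTop ℚ) < v (algebraMap K (AlgebraicClosure K) (a p - a q))) →
    ∃ b : K, ∀ N : ℚ, ∃ M : ℕ, ∀ p : ℕ, M ≤ p →
      ((N : ℚ) : WithTop ℚ) < v (algebraMap K (AlgebraicClosure K) (a p - b))
  finite_residue : ∃ T : Finset K, ∀ x : K,
    0 ≤ v (algebraMap K (AlgebraicClosure K) x) →
    ∃ y ∈ T, 0 < v (algebraMap K (AlgebraicClosure K) (x - y))

namespace OkutsuSetup

variable {K : Type} [Field K] [CharZero K]

/-- The valuation of `K` itself. -/
def vK (S : OkutsuSetup K) (x : K) : WithTop ℚ :=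
  S.v (algebraMap K (AlgebraicClosure K) x)

/-- The ring of integers `𝓞` of `K`. -/
def integers (S : OkutsuSetup K) : Subring K where
  carrier := {x : K | 0 ≤ S.vK x}
  zero_mem' := by
    show (0 : WithTop ℚ) ≤ S.vK 0
    unfold vK
    rw [map_zero, (S.v_eq_top_iff 0).mpr rfl]
    exact le_top
  one_mem' := by
    show (0 : WithTop ℚ) ≤ S.vK 1
    unfold vK
    rw [map_one, S.v_one]
  add_mem' := by
    intro a b ha hb
    show (0 : WithTop ℚ) ≤ S.vK (a + b)
    unfold vK
    rw [map_add]
    exact le_trans (le_min ha hb) (S.v_min_le_add _ _)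
  mul_mem' := by
    intro a b ha hb
    show (0 : WithTop ℚ) ≤ S.vK (a * b)
    unfold vK
    rw [map_mul, S.v_mul]
    exact add_nonneg ha hb
  neg_mem' := by
    intro a ha
    show (0 : WithTop ℚ) ≤ S.vK (-a)
    unfold vK
    rw [map_neg, S.v_neg]
    exact ha

/-- The maximal ideal `𝔪` of the ring of integers of `K`. -/
def maximalIdeal (S : OkutsuSetup K) : Ideal S.integers where
  carrier := {x : S.integers | 0 < S.vK (x : K)}
  zero_mem' := by
    show (0 : WithTop ℚ) < S.vK ((0 : S.integers) : K)
    have h0 : ((0 : S.integers) : K) = (0 : K) := rfl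
    rw [h0]
    unfold vK
    rw [map_zero, (S.v_eq_top_iff 0).mpr rfl]
    exact WithTop.coe_lt_top 0
  add_mem' := by
    intro a b ha hb
    show (0 : WithTop ℚ) < S.vK ((a : K) + (b : K))
    refine lt_of_lt_of_le (lt_min ha hb) ?_
    unfold vK
    rw [map_add]
    exact S.v_min_le_add _ _
  smul_mem' := by
    intro c x hx
    show (0 : WithTop ℚ) < S.vK ((c : K) * (x : K))
    unfold vK
    rw [map_mul, S.v_mul]
    calc (0 : WithTop ℚ) < S.v (algebraMap K (AlgebraicClosure K) (x : K)) := hx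
    _ ≤ _ + _ := le_add_of_nonneg_left c.2

/-- The residue field `𝓞/𝔪` of `K`. -/
abbrev Residue (S : OkutsuSetup K) : Type :=
  S.integers ⧸ S.maximalIdeal

/-- The residue characteristic of `K`. -/
def resChar (S : OkutsuSetup K) : ℕ :=
  ringChar S.Residue

/-- Reduction of a polynomial with integer coefficients modulo `𝔪`. -/
def reduce (S : OkutsuSetup K) (F : Polynomial S.integers) : Polynomial S.Residue :=
  F.map (Ideal.Quotient.mk S.maximalIdeal)

/-- Evaluation of a polynomial with coefficients in `𝓞` at a point of the algebraic
closure of `K`. -/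
def evalK (S : OkutsuSetup K) (F : Polynomial S.integers) (θ : AlgebraicClosure K) :
    AlgebraicClosure K :=
  Polynomial.aeval θ (F.map S.integers.subtype)

/-- `v(g)` for a polynomial `g`: the minimum of the valuations of its coefficients. -/
def vPoly (S : OkutsuSetup K) (g : Polynomial S.integers) : WithTop ℚ :=
  (Finset.range (g.natDegree + 1)).inf fun i => S.vK ((g.coeff i : K))

/-- The ramification index `e(E/K)` of a finite subextension `E` of `K̄/K`: the least
positive integer `e` such that all values of `v` on `E*` lie in `(1/e)ℤ`. -/
def ramIdx (S : OkutsuSetup K) (E : IntermediateField K (AlgebraicClosure K)) : ℕ :=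
  sInf {e : ℕ | 0 < e ∧ ∀ x ∈ E, x ≠ (0 : AlgebraicClosure K) →
    ∃ k : ℤ, S.v x = (((k : ℚ) / (e : ℚ) : ℚ) : WithTop ℚ)}

/-- The residual degree `f(E/K)` of a finite subextension `E` of `K̄/K`; since `K` is a
complete discretely valued field, `[E : K] = e(E/K)·f(E/K)`. -/
def resDeg (S : OkutsuSetup K) (E : IntermediateField K (AlgebraicClosure K)) : ℕ :=
  Module.finrank K E / S.ramIdx E

/-- A subextension `E/K` is tamely ramified when its ramification index is prime to the
residue characteristic of `K`. -/
def IsTame (S : OkutsuSetup K) (E : IntermediateField K (AlgebraicClosure K)) : Prop :=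
  Nat.Coprime (S.ramIdx E) S.resChar

/-- The Okutsu invariants `m_0 = 1 ≤ m_1 < ⋯ < m_r < m_{r+1} = n` and
`μ_0 = 0 < μ_1 < ⋯ < μ_r < μ_{r+1} = ∞` of a monic irreducible polynomial of degree `n`
with root `θ`:  `m i` is the least `[K(η):K]` over `η` with `v(θ-η) > μ (i-1)`, and
`μ i` is the greatest value of `v(θ-η)` over `η` with `[K(η):K] = m i`.
`r` is the depth: the number of indices `i ≥ 1` with `m i < n`. -/
structure OkutsuData (S : OkutsuSetup K) (θ : AlgebraicClosure K) (n : ℕ) : Type where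
  r : ℕ
  m : ℕ → ℕ
  μ : ℕ → WithTop ℚ
  m_zero : m 0 = 1
  mu_zero : μ 0 = 0
  m_isLeast : ∀ i, 1 ≤ i → i ≤ r + 1 →
    IsLeast {d : ℕ | ∃ η : AlgebraicClosure K,
      (minpoly K η).natDegree = d ∧ μ (i - 1) < S.v (θ - η)} (m i)
  mu_isGreatest : ∀ i, 1 ≤ i → i ≤ r + 1 →
    IsGreatest {c : WithTop ℚ | ∃ η : AlgebraicClosure K,
      (minpoly K η).natDegree = m i ∧ S.v (θ - η) = c} (μ i)
  m_lt_n : ∀ i, 1 ≤ i → i ≤ r → m i < n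
  m_last : m (r + 1) = n

/-- `[F_1, …, F_r]` is an Okutsu frame of the monic irreducible polynomial with root `θ`
and Okutsu invariants `D`: for each `1 ≤ i ≤ r`, `F_i` is the minimal polynomial of some
`α_i ∈ K̄` with `[K(α_i):K] = m_i` and `v(θ - α_i) = μ_i`. -/
def IsFrame (S : OkutsuSetup K) {θ : AlgebraicClosure K} {n : ℕ} (D : OkutsuData S θ n)
    (Fr : ℕ → Polynomial S.integers) : Prop :=
  ∀ i, 1 ≤ i → i ≤ D.r → ∃ α : AlgebraicClosure K,
    (minpoly K α).natDegree = D.m i ∧ S.v (θ - α) = D.μ i ∧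
      (Fr i).map S.integers.subtype = minpoly K α

/-- `φ` is a Montes approximation to the monic irreducible polynomial `F`:  a monic
irreducible polynomial of the same degree `n` having a root `α` with `v(θ - α) > μ_r`,
where `θ` is a root of `F`. -/
def IsMontesApprox (S : OkutsuSetup K) (F φ : Polynomial S.integers) : Prop :=
  φ.Monic ∧ Irreducible (φ.map S.integers.subtype) ∧ φ.natDegree = F.natDegree ∧
    ∃ θ : AlgebraicClosure K, S.evalK F θ = 0 ∧
      ∃ D : OkutsuData S θ F.natDegree, ∃ α : AlgebraicClosure K,
        S.evalK φ α = 0 ∧ D.μ D.r < S.v (θ - α)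

end OkutsuSetup

set_option linter.unusedSectionVars false
namespace OkutsuProof

open OkutsuSetup Polynomial

variable {K : Type} [Field K] [CharZero K] (S : OkutsuSetup K)

local notation "KB" => AlgebraicClosure K

lemma v_zero : S.v 0 = ⊤ := (S.v_eq_top_iff 0).mpr rfl

lemma v_ne_top {x : KB} (hx : x ≠ 0) : S.v x ≠ ⊤ := fun h => hx ((S.v_eq_top_iff x).mp h)

lemma v_sub_rev (x y : KB) : S.v (x - y) = S.v (y - x) := by
  rw [← S.v_neg (x - y), neg_sub]

lemma v_add_eq_left {x y : KB} (h : S.v x < S.v y) : S.v (x + y) = S.v x := by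
  refine le_antisymm ?_ (le_trans (le_min le_rfl h.le) (S.v_min_le_add x y))
  by_contra hlt
  push_neg at hlt
  have h2 : min (S.v (x + y)) (S.v (-y)) ≤ S.v x := by
    have := S.v_min_le_add (x + y) (-y)
    simpa using this
  rw [S.v_neg] at h2
  exact absurd h2 (not_le.mpr (lt_min hlt h))

lemma v_sum_le {ι : Type} (s : Multiset ι) (f : ι → KB) (c : WithTop ℚ)
    (h : ∀ i ∈ s, c ≤ S.v (f i)) : c ≤ S.v (s.map f).sum := by
  induction s using Multiset.induction with
  | empty => simp [v_zero]
  | cons a t ih =>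
    simp only [Multiset.map_cons, Multiset.sum_cons]
    refine le_trans (le_min (h a (Multiset.mem_cons_self a t))
      (ih (fun i hi => h i (Multiset.mem_cons_of_mem hi)))) (S.v_min_le_add _ _)

lemma v_prod {ι : Type} (s : Multiset ι) (f : ι → KB) :
    S.v (s.map f).prod = (s.map (fun i => S.v (f i))).sum := by
  induction s using Multiset.induction with
  | empty => simp [S.v_one]
  | cons a t ih => simp [S.v_mul, ih]

end OkutsuProof
set_option linter.unusedSectionVars false
namespace OkutsuProof
variable {K : Type} [Field K] [CharZero K] (S : OkutsuSetup K)
local notation "KB" => AlgebraicClosure K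

lemma v_aut (σ : KB ≃ₐ[K] KB) (x : KB) : S.v (σ x) = S.v x := by
  have hx : x ∈ (⊤ : IntermediateField K KB) := trivial
  let σ' : (⊤ : IntermediateField K KB) ≃ₐ[K] (⊤ : IntermediateField K KB) :=
    (IntermediateField.topEquiv.trans σ).trans IntermediateField.topEquiv.symm
  have := S.v_aut_invariant ⊤ σ' ⟨x, hx⟩
  have hcoe : ((σ' ⟨x, hx⟩ : (⊤ : IntermediateField K KB)) : KB) = σ x := rfl
  rw [hcoe] at this
  exact this

lemma conj_exists {x y : KB} (h : Polynomial.aeval x (minpoly K y) = 0) :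
    ∃ σ : KB ≃ₐ[K] KB, σ y = x :=
  minpoly.exists_algEquiv_of_root' (Algebra.IsAlgebraic.isAlgebraic y) h

lemma v_conj {x y : KB} (h : Polynomial.aeval x (minpoly K y) = 0) : S.v x = S.v y := by
  obtain ⟨σ, hσ⟩ := conj_exists h
  rw [← hσ, v_aut]

end OkutsuProof
set_option linter.unusedSectionVars false
namespace OkutsuProof
open Polynomial
variable {K : Type} [Field K] [CharZero K] (S : OkutsuSetup K)
local notation "KB" => AlgebraicClosure K

/-- base change of a polynomial over `K` to the algebraic closure -/
def pb (P : Polynomial K) : Polynomial (AlgebraicClosure K) := P.map (algebraMap K (AlgebraicClosure K))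

lemma pb_natDegree (P : Polynomial K) : (pb P).natDegree = P.natDegree :=
  Polynomial.natDegree_map_eq_of_injective (algebraMap K KB).injective P

lemma pb_monic {P : Polynomial K} (h : P.Monic) : (pb P).Monic := h.map _

lemma pb_splits (P : Polynomial K) : (pb P).Splits :=
  IsAlgClosed.splits _

lemma card_roots_pb {P : Polynomial K} (h : P.Monic) :
    Multiset.card (pb P).roots = P.natDegree := by
  rw [← pb_natDegree P]
  exact (Polynomial.splits_iff_card_roots).mp (pb_splits P)

lemma aeval_eq_eval_pb (P : Polynomial K) (x : KB) :
    Polynomial.aeval x P = Polynomial.eval x (pb P) := by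
  rw [Polynomial.aeval_def]
  exact (Polynomial.eval_map _ _).symm

lemma pb_eq_prod {P : Polynomial K} (h : P.Monic) :
    pb P = ((pb P).roots.map (fun a => X - C a)).prod :=
  (pb_splits P).eq_prod_roots_of_monic (pb_monic h)

lemma v_aeval_monic {P : Polynomial K} (h : P.Monic) (x : KB) :
    S.v (Polynomial.aeval x P) = ((pb P).roots.map (fun r => S.v (x - r))).sum := by
  conv_lhs => rw [aeval_eq_eval_pb, pb_eq_prod h]
  rw [Polynomial.eval_multiset_prod]
  have : ((pb P).roots.map (fun a => X - C a)).map (Polynomial.eval x)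
      = (pb P).roots.map (fun r => x - r) := by
    rw [Multiset.map_map]; apply Multiset.map_congr rfl; intro r _; simp
  rw [this, ← v_prod S _ (fun r => x - r)]

lemma mem_roots_pb {P : Polynomial K} (h : P ≠ 0) {r : KB} :
    r ∈ (pb P).roots ↔ Polynomial.aeval r P = 0 := by
  rw [Polynomial.mem_roots (by
    intro h0
    exact h (Polynomial.map_injective _ (algebraMap K KB).injective (by simpa [pb] using h0)))]
  unfold Polynomial.IsRoot
  rw [← aeval_eq_eval_pb]

lemma minpoly_root {P : Polynomial K} (hi : Irreducible P) (hm : P.Monic) {r : KB}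
    (hr : r ∈ (pb P).roots) : minpoly K r = P :=
  (minpoly.eq_of_irreducible_of_monic hi ((mem_roots_pb hm.ne_zero).mp hr) hm).symm

lemma sum_swap {α β : Type} (s : Multiset α) (t : Multiset β) (f : α → β → WithTop ℚ) :
    (s.map (fun a => (t.map (fun b => f a b)).sum)).sum
      = (t.map (fun b => (s.map (fun a => f a b)).sum)).sum := by
  induction s using Multiset.induction with
  | empty => simp
  | cons a s ih =>
    simp only [Multiset.map_cons, Multiset.sum_cons, ih]
    rw [← Multiset.sum_map_add]

/-- the fundamental symmetry: for monic `P`, `Q`, the sum of `v (Q(ρ))` over roots of `P`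
equals the sum of `v (P(b))` over roots of `Q`. -/
lemma v_sum_symm {P Q : Polynomial K} (hP : P.Monic) (hQ : Q.Monic) :
    ((pb P).roots.map (fun ρ => S.v (Polynomial.aeval ρ Q))).sum
      = ((pb Q).roots.map (fun b => S.v (Polynomial.aeval b P))).sum := by
  have h1 : ((pb P).roots.map (fun ρ => S.v (Polynomial.aeval ρ Q))).sum
      = ((pb P).roots.map (fun ρ => ((pb Q).roots.map (fun b => S.v (ρ - b))).sum)).sum := by
    apply congrArg; apply Multiset.map_congr rfl; intro ρ _; exact v_aeval_monic S hQ ρ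
  have h2 : ((pb Q).roots.map (fun b => S.v (Polynomial.aeval b P))).sum
      = ((pb Q).roots.map (fun b => ((pb P).roots.map (fun ρ => S.v (ρ - b))).sum)).sum := by
    apply congrArg; apply Multiset.map_congr rfl; intro b _
    rw [v_aeval_monic S hP b]
    apply congrArg; apply Multiset.map_congr rfl; intro ρ _; exact v_sub_rev S b ρ
  rw [h1, h2, sum_swap]

end OkutsuProof
set_option linter.unusedSectionVars false
namespace OkutsuProof
open Polynomial
variable {K : Type} [Field K] [CharZero K] (S : OkutsuSetup K)
local notation "KB" => AlgebraicClosure K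

lemma nsmul_top {n : ℕ} (hn : 0 < n) : n • (⊤ : WithTop ℚ) = ⊤ := by
  induction n with
  | zero => omega
  | succ k ih =>
    rcases Nat.eq_zero_or_pos k with hk | hk
    · subst hk; simp
    · rw [succ_nsmul, ih hk]; simp

lemma nsmul_le_cancel {n : ℕ} (hn : 0 < n) {a b : WithTop ℚ} (h : n • a ≤ n • b) : a ≤ b := by
  cases b with
  | top => exact le_top
  | coe q =>
    cases a with
    | top =>
      rw [nsmul_top hn, top_le_iff, ← WithTop.coe_nsmul] at h
      exact absurd h (WithTop.coe_ne_top)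
    | coe p =>
      rw [← WithTop.coe_nsmul, ← WithTop.coe_nsmul, WithTop.coe_le_coe] at h
      rw [WithTop.coe_le_coe]
      have hn' : (0:ℚ) < n := by exact_mod_cast hn
      rw [nsmul_eq_mul, nsmul_eq_mul] at h
      exact le_of_mul_le_mul_left h hn'

lemma nsmul_eq_cancel {n : ℕ} (hn : 0 < n) {a b : WithTop ℚ} (h : n • a = n • b) : a = b :=
  le_antisymm (nsmul_le_cancel hn h.le) (nsmul_le_cancel hn h.ge)

lemma nsmul_mono {n : ℕ} {a b : WithTop ℚ} (h : a ≤ b) : n • a ≤ n • b := by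
  induction n with
  | zero => simp
  | succ k ih => rw [succ_nsmul, succ_nsmul]; exact add_le_add ih h

/-- `v` of a polynomial over the algebraic closure : min of values of coefficients. -/
def VP (q : Polynomial KB) : WithTop ℚ :=
  (Finset.range (q.natDegree + 1)).inf (fun j => S.v (q.coeff j))

lemma le_VP {q : Polynomial KB} {c : WithTop ℚ} (h : ∀ j, c ≤ S.v (q.coeff j)) :
    c ≤ VP S q := Finset.le_inf (fun j _ => h j)

lemma VP_le_coeff (q : Polynomial KB) (j : ℕ) : VP S q ≤ S.v (q.coeff j) := by
  rcases le_or_gt j q.natDegree with hj | hj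
  · exact Finset.inf_le (Finset.mem_range.mpr (by omega))
  · rw [Polynomial.coeff_eq_zero_of_natDegree_lt hj, v_zero]; exact le_top

lemma v_finset_sum {ι : Type} (s : Finset ι) (f : ι → KB) (c : WithTop ℚ)
    (h : ∀ i ∈ s, c ≤ S.v (f i)) : c ≤ S.v (∑ i ∈ s, f i) := by
  classical
  induction s using Finset.induction with
  | empty => simp [v_zero]
  | insert a t hni ih =>
    rw [Finset.sum_insert hni]
    refine le_trans (le_min (h a (Finset.mem_insert_self a t))
      (ih (fun i hi => h i (Finset.mem_insert_of_mem hi)))) (S.v_min_le_add _ _)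

/-- easy half of Gauss's lemma -/
lemma VP_mul_ge (q q' : Polynomial KB) : VP S q + VP S q' ≤ VP S (q * q') := by
  apply le_VP
  intro j
  rw [Polynomial.coeff_mul]
  apply v_finset_sum
  intro p _
  rw [S.v_mul]
  exact add_le_add (VP_le_coeff S q p.1) (VP_le_coeff S q' p.2)

lemma VP_C_mul (c : KB) (q : Polynomial KB) : S.v c + VP S q ≤ VP S (C c * q) := by
  have h : VP S (C c) = S.v c := by
    unfold VP
    rw [Polynomial.natDegree_C]
    simp
  rw [← h]; exact VP_mul_ge S _ q

lemma VP_multiset_prod (s : Multiset (Polynomial KB)) :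
    (s.map (fun q => VP S q)).sum ≤ VP S s.prod := by
  induction s using Multiset.induction with
  | empty =>
    simp only [Multiset.map_zero, Multiset.sum_zero, Multiset.prod_zero]
    apply le_VP; intro j
    rcases Nat.eq_zero_or_pos j with hj | hj
    · subst hj; simp [S.v_one]
    · rw [Polynomial.coeff_one, if_neg (by omega)]
      rw [v_zero]; exact le_top
  | cons a t ih =>
    simp only [Multiset.map_cons, Multiset.sum_cons, Multiset.prod_cons]
    exact le_trans (add_le_add le_rfl ih) (VP_mul_ge S a t.prod)

lemma v_sub_min (x y : KB) : min (S.v x) (S.v y) ≤ S.v (x - y) := by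
  rw [sub_eq_add_neg]
  refine le_trans (le_min (min_le_left _ _) ?_) (S.v_min_le_add x (-y))
  rw [S.v_neg]; exact min_le_right _ _

/-- coefficients of `∏ (X - a)` over a multiset with `v ≥ c ≤ 0` have `v ≥ card • c`. -/
lemma coeff_prod_bound (s : Multiset KB) (c : WithTop ℚ) (hc : c ≤ 0)
    (h : ∀ b ∈ s, c ≤ S.v b) :
    ∀ j, (Multiset.card s) • c ≤ S.v ((s.map (fun a => X - C a)).prod.coeff j) := by
  induction s using Multiset.induction with
  | empty =>
    intro j
    simp only [Multiset.map_zero, Multiset.prod_zero, Multiset.card_zero, zero_smul]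
    rcases Nat.eq_zero_or_pos j with hj | hj
    · subst hj; simp [S.v_one]
    · rw [Polynomial.coeff_one, if_neg (by omega), v_zero]; exact le_top
  | cons a t ih =>
    intro j
    have ha : c ≤ S.v a := h a (Multiset.mem_cons_self a t)
    have ih' := ih (fun b hb => h b (Multiset.mem_cons_of_mem hb))
    simp only [Multiset.map_cons, Multiset.prod_cons, Multiset.card_cons]
    set p := (t.map (fun a => X - C a)).prod with hp
    have hsucc : (Multiset.card t + 1) • c = Multiset.card t • c + c := succ_nsmul c _
    have hstep : (Multiset.card t + 1) • c ≤ Multiset.card t • c := by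
      rw [hsucc]
      calc Multiset.card t • c + c ≤ Multiset.card t • c + 0 := add_le_add le_rfl hc
      _ = Multiset.card t • c := add_zero _
    have hmul : ((X - C a) * p).coeff j = (X * p).coeff j - a * p.coeff j := by
      rw [sub_mul, Polynomial.coeff_sub, Polynomial.coeff_C_mul]
    have hterm : (Multiset.card t + 1) • c ≤ S.v (a * p.coeff j) := by
      rw [S.v_mul, hsucc, add_comm (Multiset.card t • c) c]
      exact add_le_add ha (ih' j)
    cases j with
    | zero =>
      rw [hmul, Polynomial.mul_coeff_zero, Polynomial.coeff_X_zero, zero_mul, zero_sub, S.v_neg]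
      exact hterm
    | succ k =>
      rw [hmul, Polynomial.coeff_X_mul]
      exact le_trans (le_min (le_trans hstep (ih' k)) hterm) (v_sub_min S _ _)

end OkutsuProof
set_option linter.unusedSectionVars false
namespace OkutsuProof
open Polynomial
variable {K : Type} [Field K] [CharZero K] (S : OkutsuSetup K)
local notation "KB" => AlgebraicClosure K

lemma v_pow (x : KB) (k : ℕ) : S.v (x ^ k) = k • S.v x := by
  induction k with
  | zero => simp [S.v_one]
  | succ j ih => rw [pow_succ, S.v_mul, ih, succ_nsmul]

lemma nsmul_nonpos {c : WithTop ℚ} (hc : c ≤ 0) (k : ℕ) : k • c ≤ 0 := by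
  induction k with
  | zero => simp
  | succ j ih => rw [succ_nsmul]; calc j • c + c ≤ 0 + 0 := add_le_add ih hc
                                   _ = 0 := add_zero 0

lemma nsmul_anti {c : WithTop ℚ} (hc : c ≤ 0) {j k : ℕ} (hjk : j ≤ k) : k • c ≤ j • c := by
  obtain ⟨d, rfl⟩ := Nat.exists_eq_add_of_le hjk
  rw [add_nsmul]
  calc j • c + d • c ≤ j • c + 0 := add_le_add le_rfl (nsmul_nonpos hc d)
  _ = j • c := add_zero _

/-- the `K`-coefficient polynomial of an integral polynomial -/
def gK (g : Polynomial S.integers) : Polynomial K := g.map S.integers.subtype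

lemma gK_natDegree (g : Polynomial S.integers) : (gK S g).natDegree = g.natDegree :=
  Polynomial.natDegree_map_eq_of_injective (fun a b hab => Subtype.ext hab) g

lemma gK_coeff (g : Polynomial S.integers) (j : ℕ) : (gK S g).coeff j = (g.coeff j : K) :=
  Polynomial.coeff_map _ j

lemma evalK_eq (g : Polynomial S.integers) (x : KB) :
    S.evalK g x = Polynomial.aeval x (gK S g) := rfl

lemma coeff_nonneg (g : Polynomial S.integers) (j : ℕ) :
    0 ≤ S.v ((pb (gK S g)).coeff j) := by
  rw [pb, Polynomial.coeff_map, gK_coeff]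
  exact (g.coeff j).2

lemma v_root_nonneg {g : Polynomial S.integers} (hg : g.Monic) {x : KB}
    (hx : S.evalK g x = 0) : 0 ≤ S.v x := by
  by_contra hneg
  push_neg at hneg
  set n := g.natDegree with hn
  have hn1 : 1 ≤ n := by
    by_contra h0
    have : n = 0 := by omega
    have hone : g = 1 := hg.natDegree_eq_zero.mp this
    rw [hone] at hx
    rw [evalK_eq] at hx
    simp [gK] at hx
  have hxne : x ≠ 0 := by
    intro h0; rw [h0, v_zero] at hneg; exact absurd hneg (by simp)
  obtain ⟨q, hq⟩ : ∃ q : ℚ, S.v x = (q : WithTop ℚ) := by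
    cases hv : S.v x with
    | top => exact absurd hv (v_ne_top S hxne)
    | coe q => exact ⟨q, rfl⟩
  have hq0 : q < 0 := by
    rw [hq] at hneg
    exact_mod_cast hneg
  have haeval : Polynomial.aeval x (gK S g) = 0 := by rw [← evalK_eq]; exact hx
  have hdeg : (gK S g).natDegree = n := gK_natDegree S g
  rw [Polynomial.aeval_eq_sum_range, hdeg, Finset.sum_range_succ] at haeval
  have htop : (gK S g).coeff n • x ^ n = x ^ n := by
    have : (gK S g).coeff n = 1 := by
      rw [gK_coeff]
      have : g.coeff n = 1 := hg.coeff_natDegree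
      rw [this]; simp
    rw [this, one_smul]
  rw [htop] at haeval
  have hxn : x ^ n = -(∑ j ∈ Finset.range n, (gK S g).coeff j • x ^ j) := by
    linear_combination haeval
  set c : ℚ := ((n:ℚ) - 1) * q with hc
  have hb : (c : WithTop ℚ) ≤ S.v (x ^ n) := by
    rw [hxn, S.v_neg]
    apply v_finset_sum
    intro j hj
    rw [Algebra.smul_def ((gK S g).coeff j) (x ^ j), S.v_mul, v_pow, hq]
    have h1 : (0 : WithTop ℚ) ≤ S.v (algebraMap K KB ((gK S g).coeff j)) := by
      have := coeff_nonneg S g j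
      rwa [pb, Polynomial.coeff_map] at this
    have h2 : (c : WithTop ℚ) ≤ j • (q : WithTop ℚ) := by
      rw [← WithTop.coe_nsmul, WithTop.coe_le_coe, nsmul_eq_mul]
      have hjn : (j : ℚ) ≤ (n:ℚ) - 1 := by
        have : j + 1 ≤ n := Finset.mem_range.mp hj
        have := (Nat.cast_le (α := ℚ)).mpr this
        push_cast at this ⊢
        linarith
      exact mul_le_mul_of_nonpos_right hjn hq0.le
    calc (c : WithTop ℚ) ≤ j • (q : WithTop ℚ) := h2
    _ = 0 + j • (q : WithTop ℚ) := (zero_add _).symm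
    _ ≤ _ := add_le_add h1 le_rfl
  rw [v_pow, hq, ← WithTop.coe_nsmul, WithTop.coe_le_coe, nsmul_eq_mul] at hb
  rw [hc] at hb
  nlinarith [hb, hq0, (by exact_mod_cast hn1 : (1:ℚ) ≤ (n:ℚ))]

lemma vPoly_eq (g : Polynomial S.integers) : S.vPoly g = VP S (pb (gK S g)) := by
  unfold OkutsuSetup.vPoly VP
  have hdeg : (pb (gK S g)).natDegree = g.natDegree := by
    rw [pb_natDegree, gK_natDegree]
  rw [hdeg]
  apply Finset.inf_congr rfl
  intro j _
  rw [pb, Polynomial.coeff_map, gK_coeff]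
  rfl

end OkutsuProof
set_option linter.unusedSectionVars false
namespace OkutsuProof
open Polynomial

lemma sum_map_le {ι : Type} (s : Multiset ι) (f g : ι → WithTop ℚ)
    (h : ∀ x ∈ s, f x ≤ g x) : (s.map f).sum ≤ (s.map g).sum := by
  induction s using Multiset.induction with
  | empty => simp
  | cons a t ih =>
    simp only [Multiset.map_cons, Multiset.sum_cons]
    exact add_le_add (h a (Multiset.mem_cons_self a t))
      (ih (fun x hx => h x (Multiset.mem_cons_of_mem hx)))

lemma sum_le_card_smul {ι : Type} (s : Multiset ι) (f : ι → WithTop ℚ) (c : WithTop ℚ)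
    (h : ∀ x ∈ s, f x ≤ c) : (s.map f).sum ≤ (Multiset.card s) • c := by
  induction s using Multiset.induction with
  | empty => simp
  | cons a t ih =>
    simp only [Multiset.map_cons, Multiset.sum_cons, Multiset.card_cons, succ_nsmul]
    rw [add_comm (Multiset.card t • c) c]
    exact add_le_add (h a (Multiset.mem_cons_self a t))
      (ih (fun x hx => h x (Multiset.mem_cons_of_mem hx)))

lemma card_smul_le_sum {ι : Type} (s : Multiset ι) (f : ι → WithTop ℚ) (c : WithTop ℚ)
    (h : ∀ x ∈ s, c ≤ f x) : (Multiset.card s) • c ≤ (s.map f).sum := by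
  induction s using Multiset.induction with
  | empty => simp
  | cons a t ih =>
    simp only [Multiset.map_cons, Multiset.sum_cons, Multiset.card_cons, succ_nsmul]
    rw [add_comm (Multiset.card t • c) c]
    exact add_le_add (h a (Multiset.mem_cons_self a t))
      (ih (fun x hx => h x (Multiset.mem_cons_of_mem hx)))

lemma sum_map_const {ι : Type} (s : Multiset ι) (c : WithTop ℚ) :
    (s.map (fun _ => c)).sum = (Multiset.card s) • c := by
  induction s using Multiset.induction with
  | empty => simp
  | cons a t ih =>
    simp only [Multiset.map_cons, Multiset.sum_cons, Multiset.card_cons, succ_nsmul, ih]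
    rw [add_comm (Multiset.card t • c) c]

lemma sum_map_nsmul {ι : Type} (s : Multiset ι) (f : ι → ℕ) (c : WithTop ℚ) :
    (s.map (fun x => f x • c)).sum = ((s.map f).sum) • c := by
  induction s using Multiset.induction with
  | empty => simp
  | cons a t ih =>
    simp only [Multiset.map_cons, Multiset.sum_cons, ih, add_nsmul]

lemma nsmul_sum {ι : Type} (s : Multiset ι) (f : ι → WithTop ℚ) (n : ℕ) :
    n • (s.map f).sum = (s.map (fun x => n • f x)).sum := by
  induction s using Multiset.induction with
  | empty => simp
  | cons a t ih =>
    simp only [Multiset.map_cons, Multiset.sum_cons, smul_add, ih]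

lemma exists_max {ι : Type} (s : Multiset ι) (hs : s ≠ 0) (f : ι → WithTop ℚ) :
    ∃ a ∈ s, ∀ b ∈ s, f b ≤ f a := by
  induction s using Multiset.induction with
  | empty => exact absurd rfl hs
  | cons a t ih =>
    rcases eq_or_ne t 0 with ht | ht
    · subst ht
      exact ⟨a, Multiset.mem_cons_self a 0, fun b hb => by
        rw [Multiset.mem_cons] at hb
        rcases hb with rfl | hb
        · exact le_rfl
        · simp at hb⟩
    · obtain ⟨a', ha', hmax⟩ := ih ht
      rcases le_total (f a) (f a') with hc | hc
      · exact ⟨a', Multiset.mem_cons_of_mem ha', fun b hb => by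
          rw [Multiset.mem_cons] at hb
          rcases hb with rfl | hb
          · exact hc
          · exact hmax b hb⟩
      · exact ⟨a, Multiset.mem_cons_self a t, fun b hb => by
          rw [Multiset.mem_cons] at hb
          rcases hb with rfl | hb
          · exact le_rfl
          · exact le_trans (hmax b hb) hc⟩

lemma four_eq {a b c d : WithTop ℚ} (hab : a ≤ b) (hcd : c ≤ d) (hsum : b + d ≤ a + c)
    (hfin : b + d ≠ ⊤) : a = b ∧ c = d := by
  have hd : d ≠ ⊤ := by intro h; rw [h, add_top] at hfin; exact hfin rfl
  have hb : b ≠ ⊤ := by intro h; rw [h, top_add] at hfin; exact hfin rfl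
  have hc : c ≠ ⊤ := fun h => hd (top_le_iff.mp (h ▸ hcd))
  have h1 : a + c ≤ b + c := add_le_add hab le_rfl
  have h2 : b + c ≤ b + d := add_le_add le_rfl hcd
  have e1 : a + c = b + c := le_antisymm h1 (le_trans h2 hsum)
  have e2 : b + c = b + d := le_antisymm h2 (le_trans hsum (le_of_eq e1))
  exact ⟨WithTop.add_right_cancel hc e1, WithTop.add_left_cancel hb e2⟩

lemma sum_eq_forces {ι : Type} (s : Multiset ι) (f g : ι → WithTop ℚ)
    (hle : ∀ x ∈ s, f x ≤ g x) (hsum : (s.map g).sum ≤ (s.map f).sum)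
    (hfin : (s.map g).sum ≠ ⊤) : ∀ x ∈ s, f x = g x := by
  induction s using Multiset.induction with
  | empty => intro x hx; simp at hx
  | cons a t ih =>
    simp only [Multiset.map_cons, Multiset.sum_cons] at hsum hfin
    have h1 : f a ≤ g a := hle a (Multiset.mem_cons_self a t)
    have h2 : (t.map f).sum ≤ (t.map g).sum :=
      sum_map_le t f g (fun x hx => hle x (Multiset.mem_cons_of_mem hx))
    obtain ⟨hfa, hts⟩ := four_eq h1 h2 hsum hfin
    intro x hx
    rw [Multiset.mem_cons] at hx
    rcases hx with rfl | hx
    · exact hfa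
    · exact ih (fun y hy => hle y (Multiset.mem_cons_of_mem hy))
        (le_of_eq hts.symm) (by
          intro h
          rw [h, add_top] at hfin; exact hfin rfl) x hx

end OkutsuProof
set_option linter.unusedSectionVars false
set_option maxHeartbeats 1000000
namespace OkutsuProof
open Polynomial OkutsuSetup
variable {K : Type} [Field K] [CharZero K] (S : OkutsuSetup K)
local notation "KB" => AlgebraicClosure K

section Context

variable (F : Polynomial S.integers) (θ : AlgebraicClosure K) {n : ℕ}

/-- the multiset of roots of `F` in the algebraic closure -/
def RR : Multiset (AlgebraicClosure K) := (pb (gK S F)).roots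

/-- the Okutsu bound `V_i = Σ_ρ min(v(θ-ρ), μ_i)` -/
def Vv (D : OkutsuData S θ n) (i : ℕ) : WithTop ℚ :=
  ((RR S F).map (fun ρ => min (S.v (θ - ρ)) (D.μ i))).sum

variable {S F θ}

lemma minθ (hFmonic : F.Monic) (hFirr : Irreducible (F.map S.integers.subtype))
    (hθ : S.evalK F θ = 0) : minpoly K θ = gK S F :=
  (minpoly.eq_of_irreducible_of_monic hFirr (show Polynomial.aeval θ (gK S F) = 0 from hθ)
    (hFmonic.map _ : (gK S F).Monic)).symm

lemma degθ (hFmonic : F.Monic) (hFirr : Irreducible (F.map S.integers.subtype))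
    (hθ : S.evalK F θ = 0) (hFdeg : F.natDegree = n) : (minpoly K θ).natDegree = n := by
  rw [minθ hFmonic hFirr hθ, gK_natDegree, hFdeg]

lemma θ_mem (hFmonic : F.Monic) (hθ : S.evalK F θ = 0) : θ ∈ RR S F :=
  (mem_roots_pb (P := gK S F) (hFmonic.map _ : (gK S F).Monic).ne_zero).mpr hθ

lemma card_RR (hFmonic : F.Monic) (hFdeg : F.natDegree = n) :
    Multiset.card (RR S F) = n := by
  unfold RR
  rw [card_roots_pb (P := gK S F) (hFmonic.map _ : (gK S F).Monic), gK_natDegree, hFdeg]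

lemma root_min (hFmonic : F.Monic) (hFirr : Irreducible (F.map S.integers.subtype))
    {ρ : KB} (hρ : ρ ∈ RR S F) : minpoly K ρ = gK S F :=
  minpoly_root hFirr (hFmonic.map _ : (gK S F).Monic) hρ

lemma root_nonneg (hFmonic : F.Monic) {ρ : KB} (hρ : ρ ∈ RR S F) : 0 ≤ S.v ρ :=
  v_root_nonneg S hFmonic ((mem_roots_pb (P := gK S F) (hFmonic.map _ : (gK S F).Monic).ne_zero).mp hρ)

lemma conj_θ (hFmonic : F.Monic) (hFirr : Irreducible (F.map S.integers.subtype))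
    (hθ : S.evalK F θ = 0) {ρ : KB} (hρ : ρ ∈ RR S F) :
    ∃ σ : KB ≃ₐ[K] KB, σ θ = ρ := by
  apply conj_exists
  rw [minθ hFmonic hFirr hθ]
  exact (mem_roots_pb (P := gK S F) (hFmonic.map _ : (gK S F).Monic).ne_zero).mp hρ

lemma σ_root (hFmonic : F.Monic) (σ : KB ≃ₐ[K] KB) {ρ : KB} (hρ : ρ ∈ RR S F) :
    σ ρ ∈ RR S F := by
  rw [RR, mem_roots_pb (P := gK S F) (hFmonic.map _ : (gK S F).Monic).ne_zero]
  have h0 : Polynomial.aeval ρ (gK S F) = 0 :=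
    (mem_roots_pb (P := gK S F) (hFmonic.map _ : (gK S F).Monic).ne_zero).mp hρ
  have h1 : Polynomial.aeval (σ ρ) (gK S F) = σ (Polynomial.aeval ρ (gK S F)) :=
    Polynomial.aeval_algHom_apply (σ : KB →ₐ[K] KB) ρ (gK S F)
  rw [h1, h0, map_zero]

variable (D : OkutsuData S θ n)

lemma mu_lt {i : ℕ} (h1 : 1 ≤ i) (h2 : i ≤ D.r + 1) : D.μ (i - 1) < D.μ i := by
  obtain ⟨η, hηdeg, hηgt⟩ := (D.m_isLeast i h1 h2).1
  exact lt_of_lt_of_le hηgt ((D.mu_isGreatest i h1 h2).2 ⟨η, hηdeg, rfl⟩)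

lemma mu_nonneg : ∀ i, i ≤ D.r + 1 → 0 ≤ D.μ i := by
  intro i
  induction i with
  | zero => intro _; rw [D.mu_zero]
  | succ j ih =>
    intro hj
    have := mu_lt D (i := j + 1) (by omega) hj
    simp only [Nat.add_sub_cancel] at this
    exact le_of_lt (lt_of_le_of_lt (ih (by omega)) this)

lemma mu_pos {i : ℕ} (h1 : 1 ≤ i) (h2 : i ≤ D.r + 1) : 0 < D.μ i := by
  have := mu_lt D h1 h2
  exact lt_of_le_of_lt (mu_nonneg D (i - 1) (by omega)) this

lemma m_pos {i : ℕ} (h1 : 1 ≤ i) (h2 : i ≤ D.r + 1) : 1 ≤ D.m i := by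
  obtain ⟨η, hηdeg, _⟩ := (D.m_isLeast i h1 h2).1
  rw [← hηdeg]
  exact minpoly.natDegree_pos (Algebra.IsAlgebraic.isAlgebraic η).isIntegral

lemma mu_ne_top (hFmonic : F.Monic) (hFirr : Irreducible (F.map S.integers.subtype))
    (hθ : S.evalK F θ = 0) (hFdeg : F.natDegree = n)
    {i : ℕ} (h1 : 1 ≤ i) (h2 : i ≤ D.r) : D.μ i ≠ ⊤ := by
  intro htop
  obtain ⟨η, hηdeg, hηv⟩ := (D.mu_isGreatest i h1 (by omega)).1
  rw [htop] at hηv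
  have : θ - η = 0 := (S.v_eq_top_iff _).mp hηv
  have hθη : θ = η := by linear_combination this
  have hlt := D.m_lt_n i h1 h2
  rw [← hηdeg, ← hθη, degθ hFmonic hFirr hθ hFdeg] at hlt
  omega

lemma E1 (hFmonic : F.Monic) (hFirr : Irreducible (F.map S.integers.subtype))
    (hθ : S.evalK F θ = 0)
    {i : ℕ} (h1 : 1 ≤ i) (h2 : i ≤ D.r + 1) {β : KB}
    (hβ : (minpoly K β).natDegree ≤ D.m i) : S.v (θ - β) ≤ D.μ i := by
  rcases eq_or_lt_of_le hβ with heq | hlt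
  · exact (D.mu_isGreatest i h1 h2).2 ⟨β, heq, rfl⟩
  · by_contra hgt
    push_neg at hgt
    have hmem : (minpoly K β).natDegree ∈ {d : ℕ | ∃ η : KB,
        (minpoly K η).natDegree = d ∧ D.μ (i - 1) < S.v (θ - η)} :=
      ⟨β, rfl, lt_trans (mu_lt D h1 h2) hgt⟩
    have := (D.m_isLeast i h1 h2).2 hmem
    omega

lemma E1' (hFmonic : F.Monic) (hFirr : Irreducible (F.map S.integers.subtype))
    (hθ : S.evalK F θ = 0)
    {i : ℕ} (h1 : 1 ≤ i) (h2 : i ≤ D.r + 1) {β : KB}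
    (hβ : (minpoly K β).natDegree ≤ D.m i) {ρ : KB} (hρ : ρ ∈ RR S F) :
    S.v (ρ - β) ≤ D.μ i := by
  obtain ⟨σ, hσ⟩ := conj_θ hFmonic hFirr hθ hρ
  have h : ρ - β = σ (θ - σ.symm β) := by
    rw [map_sub, hσ, AlgEquiv.apply_symm_apply]
  rw [h, v_aut]
  apply E1 hFmonic hFirr hθ h1 h2 (D := D)
  rw [minpoly.algEquiv_eq σ.symm β]
  exact hβ

lemma lemA (hFmonic : F.Monic) {β : KB}
    (hβ : ∀ ρ ∈ RR S F, S.v (ρ - β) ≤ S.v (θ - β)) :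
    S.v (Polynomial.aeval β (gK S F))
      = ((RR S F).map (fun ρ => min (S.v (θ - ρ)) (S.v (θ - β)))).sum := by
  rw [v_aeval_monic S (P := gK S F) (hFmonic.map _) β]
  apply congrArg
  apply Multiset.map_congr rfl
  intro ρ hρ
  rw [v_sub_rev S β ρ]
  rcases lt_or_ge (S.v (θ - ρ)) (S.v (θ - β)) with hlt | hge
  · have heq : ρ - β = (ρ - θ) + (θ - β) := by ring
    rw [heq, v_add_eq_left S (by rw [v_sub_rev]; exact hlt), v_sub_rev, min_eq_left hlt.le]
  · rw [min_eq_right hge]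
    refine le_antisymm (hβ ρ hρ) ?_
    have heq : ρ - β = (ρ - θ) + (θ - β) := by ring
    rw [heq]
    refine le_trans (le_min ?_ le_rfl) (S.v_min_le_add _ _)
    rw [v_sub_rev S ρ θ]
    exact hge

lemma lemB (hFmonic : F.Monic) (hFirr : Irreducible (F.map S.integers.subtype))
    (hθ : S.evalK F θ = 0) (hFdeg : F.natDegree = n) (β : KB) :
    ∃ β' : KB, minpoly K β' = minpoly K β ∧
      S.v (Polynomial.aeval β' (gK S F)) = S.v (Polynomial.aeval β (gK S F)) ∧
      ∀ ρ ∈ RR S F, S.v (ρ - β') ≤ S.v (θ - β') := by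
  have hn1 : 1 ≤ n := by
    rw [← degθ hFmonic hFirr hθ hFdeg]
    exact minpoly.natDegree_pos (Algebra.IsAlgebraic.isAlgebraic θ).isIntegral
  have hRne : RR S F ≠ 0 := by
    intro h0
    have := card_RR hFmonic hFdeg (S := S) (F := F)
    rw [h0] at this
    simp at this
    omega
  obtain ⟨ρ₀, hρ₀, hmax⟩ := exists_max (RR S F) hRne (fun ρ => S.v (ρ - β))
  obtain ⟨σ, hσ⟩ := conj_θ hFmonic hFirr hθ hρ₀
  refine ⟨σ.symm β, minpoly.algEquiv_eq σ.symm β, ?_, ?_⟩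
  · rw [show Polynomial.aeval (σ.symm β) (gK S F)
        = σ.symm (Polynomial.aeval β (gK S F)) from
      Polynomial.aeval_algHom_apply (σ.symm : KB →ₐ[K] KB) β (gK S F), v_aut]
  · intro ρ hρ
    have h1 : S.v (ρ - σ.symm β) = S.v (σ ρ - β) := by
      rw [← v_aut S σ (ρ - σ.symm β), map_sub, AlgEquiv.apply_symm_apply]
    have h2 : S.v (θ - σ.symm β) = S.v (ρ₀ - β) := by
      rw [← v_aut S σ (θ - σ.symm β), map_sub, AlgEquiv.apply_symm_apply, hσ]
    rw [h1, h2]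
    exact hmax (σ ρ) (σ_root hFmonic σ hρ)

lemma lemC (hFmonic : F.Monic) (hFirr : Irreducible (F.map S.integers.subtype))
    (hθ : S.evalK F θ = 0) (hFdeg : F.natDegree = n)
    {i : ℕ} (h1 : 1 ≤ i) (h2 : i ≤ D.r + 1) {β : KB}
    (hβ : (minpoly K β).natDegree ≤ D.m i) :
    S.v (Polynomial.aeval β (gK S F)) ≤ Vv S F θ D i := by
  obtain ⟨β', hmin, hval, hA⟩ := lemB hFmonic hFirr hθ hFdeg β
  rw [← hval, lemA hFmonic hA]
  apply sum_map_le
  intro ρ hρ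
  exact min_le_min le_rfl (E1 hFmonic hFirr hθ (D := D) h1 h2 (by rw [hmin]; exact hβ))

lemma lemD (hFmonic : F.Monic) (hFirr : Irreducible (F.map S.integers.subtype))
    (hθ : S.evalK F θ = 0)
    {i : ℕ} (h1 : 1 ≤ i) (h2 : i ≤ D.r + 1) {β : KB}
    (hdeg : (minpoly K β).natDegree ≤ D.m i) (hv : S.v (θ - β) = D.μ i) :
    S.v (Polynomial.aeval β (gK S F)) = Vv S F θ D i := by
  have hA : ∀ ρ ∈ RR S F, S.v (ρ - β) ≤ S.v (θ - β) := by
    intro ρ hρ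
    rw [hv]
    exact E1' hFmonic hFirr hθ (D := D) h1 h2 hdeg hρ
  rw [lemA hFmonic hA]
  unfold Vv
  apply congrArg
  apply Multiset.map_congr rfl
  intro ρ _
  rw [hv]

lemma vθ_nonneg (hFmonic : F.Monic) (hθ : S.evalK F θ = 0) : 0 ≤ S.v θ :=
  v_root_nonneg S hFmonic hθ

lemma V_nonneg (hFmonic : F.Monic) (hθ : S.evalK F θ = 0)
    {i : ℕ} (h2 : i ≤ D.r + 1) : 0 ≤ Vv S F θ D i := by
  unfold Vv
  have := card_smul_le_sum (RR S F)
    (fun ρ => min (S.v (θ - ρ)) (D.μ i)) 0 (fun ρ hρ => by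
      apply le_min
      · exact le_trans (le_min (vθ_nonneg hFmonic hθ) (root_nonneg hFmonic hρ)) (v_sub_min S θ ρ)
      · exact mu_nonneg D i h2)
  rw [smul_zero] at this
  exact this

lemma V_le (D : OkutsuData S θ n) (i : ℕ) :
    Vv S F θ D i ≤ (Multiset.card (RR S F)) • D.μ i :=
  sum_le_card_smul _ _ _ (fun ρ _ => min_le_right _ _)

lemma V_ne_top (hFmonic : F.Monic) (hFirr : Irreducible (F.map S.integers.subtype))
    (hθ : S.evalK F θ = 0) (hFdeg : F.natDegree = n)
    {i : ℕ} (h1 : 1 ≤ i) (h2 : i ≤ D.r) : Vv S F θ D i ≠ ⊤ := by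
  obtain ⟨q, hq⟩ : ∃ q : ℚ, D.μ i = (q : WithTop ℚ) := by
    cases hv : D.μ i with
    | top => exact absurd hv (mu_ne_top D hFmonic hFirr hθ hFdeg h1 h2)
    | coe q => exact ⟨q, rfl⟩
  apply ne_top_of_le_ne_top (b := (Multiset.card (RR S F)) • D.μ i)
  · rw [hq, ← WithTop.coe_nsmul]
    exact WithTop.coe_ne_top
  · exact V_le D i

lemma ID_root (hFmonic : F.Monic) (hFirr : Irreducible (F.map S.integers.subtype))
    (hθ : S.evalK F θ = 0) (hFdeg : F.natDegree = n)
    {h : Polynomial K} (hmon : h.Monic) (hirr : Irreducible h) {b₀ : KB}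
    (hb₀ : b₀ ∈ (pb h).roots) :
    n • S.v (Polynomial.aeval θ h)
      = h.natDegree • S.v (Polynomial.aeval b₀ (gK S F)) := by
  have hsymm := v_sum_symm S (hFmonic.map _ : (gK S F).Monic) hmon
  have hL : ((pb (gK S F)).roots.map (fun ρ => S.v (Polynomial.aeval ρ h))).sum
      = n • S.v (Polynomial.aeval θ h) := by
    have hc : ∀ ρ ∈ (pb (gK S F)).roots, S.v (Polynomial.aeval ρ h)
        = S.v (Polynomial.aeval θ h) := by
      intro ρ hρ
      obtain ⟨σ, hσ⟩ := conj_θ hFmonic hFirr hθ (show ρ ∈ RR S F from hρ)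
      rw [← hσ, show Polynomial.aeval (σ θ) h = σ (Polynomial.aeval θ h) from
        Polynomial.aeval_algHom_apply (σ : KB →ₐ[K] KB) θ h, v_aut]
    rw [Multiset.map_congr rfl hc, sum_map_const,
      show Multiset.card (pb (gK S F)).roots = n from card_RR hFmonic hFdeg]
  have hR : ((pb h).roots.map (fun b => S.v (Polynomial.aeval b (gK S F)))).sum
      = h.natDegree • S.v (Polynomial.aeval b₀ (gK S F)) := by
    have hminb : ∀ b ∈ (pb h).roots, minpoly K b = h := fun b hb => minpoly_root hirr hmon hb
    have hc : ∀ b ∈ (pb h).roots, S.v (Polynomial.aeval b (gK S F))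
        = S.v (Polynomial.aeval b₀ (gK S F)) := by
      intro b hb
      obtain ⟨σ, hσ⟩ := conj_exists (x := b) (y := b₀)
        (by rw [hminb b₀ hb₀]; exact (mem_roots_pb hmon.ne_zero).mp hb)
      rw [← hσ, show Polynomial.aeval (σ b₀) (gK S F) = σ (Polynomial.aeval b₀ (gK S F)) from
        Polynomial.aeval_algHom_apply (σ : KB →ₐ[K] KB) b₀ (gK S F), v_aut]
    rw [Multiset.map_congr rfl hc, sum_map_const, card_roots_pb hmon]
  rw [← hL, ← hR]
  exact hsymm

lemma claim1 (hFmonic : F.Monic) (hFirr : Irreducible (F.map S.integers.subtype))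
    (hθ : S.evalK F θ = 0) (hFdeg : F.natDegree = n)
    {i : ℕ} (h1 : 1 ≤ i) (h2 : i ≤ D.r + 1) {h : Polynomial K} (hmon : h.Monic)
    (hirr : Irreducible h) (hdeg : h.natDegree ≤ D.m i) :
    n • S.v (Polynomial.aeval θ h)
      ≤ n • VP S (pb h) + h.natDegree • Vv S F θ D i := by
  have hd1 : 1 ≤ h.natDegree := hirr.natDegree_pos
  have hcard : Multiset.card (pb h).roots = h.natDegree := card_roots_pb hmon
  have hroots_ne : (pb h).roots ≠ 0 := by
    intro h0; rw [h0] at hcard; simp at hcard; omega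
  obtain ⟨b₀, hb₀⟩ := Multiset.exists_mem_of_ne_zero hroots_ne
  have hminb : ∀ b ∈ (pb h).roots, minpoly K b = h := fun b hb => minpoly_root hirr hmon hb
  have hallv : ∀ b ∈ (pb h).roots, S.v b = S.v b₀ := by
    intro b hb
    exact v_conj S (x := b) (y := b₀)
      (by rw [hminb b₀ hb₀]; exact (mem_roots_pb hmon.ne_zero).mp hb)
  have hVnn : 0 ≤ Vv S F θ D i := V_nonneg D hFmonic hθ h2
  rcases le_or_gt 0 (S.v b₀) with hint | hneg
  · have hVP : 0 ≤ VP S (pb h) := by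
      apply le_VP
      intro j
      have hcb := coeff_prod_bound S (pb h).roots 0 le_rfl
        (fun b hb => by rw [hallv b hb]; exact hint) j
      rw [smul_zero] at hcb
      rw [pb_eq_prod hmon]
      exact hcb
    have hb₀v : S.v (Polynomial.aeval b₀ (gK S F)) ≤ Vv S F θ D i :=
      lemC D hFmonic hFirr hθ hFdeg h1 h2 (by rw [hminb b₀ hb₀]; exact hdeg)
    rw [ID_root hFmonic hFirr hθ hFdeg hmon hirr hb₀]
    calc h.natDegree • S.v (Polynomial.aeval b₀ (gK S F))
        ≤ h.natDegree • Vv S F θ D i := nsmul_mono hb₀v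
    _ ≤ n • VP S (pb h) + h.natDegree • Vv S F θ D i := by
        apply le_add_of_nonneg_left
        calc (0 : WithTop ℚ) = n • (0 : WithTop ℚ) := (smul_zero n).symm
        _ ≤ n • VP S (pb h) := nsmul_mono hVP
  · have hθv : 0 ≤ S.v θ := vθ_nonneg hFmonic hθ
    have heval : S.v (Polynomial.aeval θ h) = h.natDegree • S.v b₀ := by
      rw [v_aeval_monic S hmon θ]
      have hc : ∀ b ∈ (pb h).roots, S.v (θ - b) = S.v b₀ := by
        intro b hb
        have heq : θ - b = (-b) + θ := by ring
        rw [heq, v_add_eq_left S (by rw [S.v_neg, hallv b hb]; exact lt_of_lt_of_le hneg hθv),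
          S.v_neg, hallv b hb]
      rw [Multiset.map_congr rfl hc, sum_map_const, hcard]
    have hVP : h.natDegree • S.v b₀ ≤ VP S (pb h) := by
      apply le_VP
      intro j
      have hcb := coeff_prod_bound S (pb h).roots (S.v b₀) hneg.le
        (fun b hb => (hallv b hb).ge) j
      rw [hcard] at hcb
      rw [pb_eq_prod hmon]
      exact hcb
    calc n • S.v (Polynomial.aeval θ h) = n • (h.natDegree • S.v b₀) := by rw [heval]
    _ ≤ n • VP S (pb h) := nsmul_mono hVP
    _ ≤ n • VP S (pb h) + h.natDegree • Vv S F θ D i := by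
        apply le_add_of_nonneg_right
        calc (0 : WithTop ℚ) = h.natDegree • (0 : WithTop ℚ) := (smul_zero _).symm
        _ ≤ h.natDegree • Vv S F θ D i := nsmul_mono hVnn

lemma eq_analysis (hFmonic : F.Monic) (hFirr : Irreducible (F.map S.integers.subtype))
    (hθ : S.evalK F θ = 0) (hFdeg : F.natDegree = n)
    {i : ℕ} (h1 : 1 ≤ i) (h2 : i ≤ D.r) {β : KB}
    (hdeg : (minpoly K β).natDegree ≤ D.m i)
    (hV : S.v (Polynomial.aeval β (gK S F)) = Vv S F θ D i) :
    ∃ β', minpoly K β' = minpoly K β ∧ S.v (θ - β') = D.μ i := by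
  classical
  obtain ⟨β', hmin, hval, hA⟩ := lemB hFmonic hFirr hθ hFdeg β
  refine ⟨β', hmin, ?_⟩
  have hδμ : S.v (θ - β') ≤ D.μ i :=
    E1 hFmonic hFirr hθ (D := D) h1 (by omega) (by rw [hmin]; exact hdeg)
  have hAeq := lemA hFmonic hA
  rw [hval, hV] at hAeq
  have hθR : θ ∈ RR S F := θ_mem hFmonic hθ
  set R' := (RR S F).erase θ with hR'
  have hRsplit : RR S F = θ ::ₘ R' := (Multiset.cons_erase hθR).symm
  have hmintop : ∀ c : WithTop ℚ, min (S.v (θ - θ)) c = c := by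
    intro c
    rw [sub_self, v_zero]
    exact min_eq_right le_top
  have e1 : Vv S F θ D i
      = D.μ i + (R'.map (fun ρ => min (S.v (θ - ρ)) (D.μ i))).sum := by
    unfold Vv
    rw [hRsplit, Multiset.map_cons, Multiset.sum_cons, hmintop]
  have e2 : ((RR S F).map (fun ρ => min (S.v (θ - ρ)) (S.v (θ - β')))).sum
      = S.v (θ - β') + (R'.map (fun ρ => min (S.v (θ - ρ)) (S.v (θ - β')))).sum := by
    rw [hRsplit, Multiset.map_cons, Multiset.sum_cons, hmintop]
  have hS'Sm : (R'.map (fun ρ => min (S.v (θ - ρ)) (S.v (θ - β')))).sum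
      ≤ (R'.map (fun ρ => min (S.v (θ - ρ)) (D.μ i))).sum :=
    sum_map_le _ _ _ (fun ρ _ => min_le_min le_rfl hδμ)
  have hSmfin : (R'.map (fun ρ => min (S.v (θ - ρ)) (D.μ i))).sum ≠ ⊤ := by
    obtain ⟨q, hq⟩ : ∃ q : ℚ, D.μ i = (q : WithTop ℚ) := by
      cases hv : D.μ i with
      | top => exact absurd hv (mu_ne_top D hFmonic hFirr hθ hFdeg h1 h2)
      | coe q => exact ⟨q, rfl⟩
    apply ne_top_of_le_ne_top (b := (Multiset.card R') • D.μ i)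
    · rw [hq, ← WithTop.coe_nsmul]
      exact WithTop.coe_ne_top
    · exact sum_le_card_smul _ _ _ (fun ρ _ => min_le_right _ _)
  have hchain : D.μ i + (R'.map (fun ρ => min (S.v (θ - ρ)) (D.μ i))).sum
      ≤ S.v (θ - β') + (R'.map (fun ρ => min (S.v (θ - ρ)) (D.μ i))).sum := by
    calc D.μ i + (R'.map (fun ρ => min (S.v (θ - ρ)) (D.μ i))).sum
        = Vv S F θ D i := e1.symm
    _ = S.v (θ - β') + (R'.map (fun ρ => min (S.v (θ - ρ)) (S.v (θ - β')))).sum := by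
        rw [hAeq, e2]
    _ ≤ S.v (θ - β') + (R'.map (fun ρ => min (S.v (θ - ρ)) (D.μ i))).sum :=
        add_le_add le_rfl hS'Sm
  have hμδ : D.μ i ≤ S.v (θ - β') :=
    (WithTop.add_le_add_iff_right hSmfin).mp hchain
  exact le_antisymm hδμ hμδ

end Context
end OkutsuProof
set_option linter.unusedSectionVars false
namespace OkutsuProof
open Polynomial
variable {K : Type} [Field K] [CharZero K] (S : OkutsuSetup K)
local notation "KB" => AlgebraicClosure K

lemma pb_one : pb (1 : Polynomial K) = 1 := Polynomial.map_one _
lemma pb_mul (p q : Polynomial K) : pb (p * q) = pb p * pb q := Polynomial.map_mul _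
lemma pb_C (c : K) : pb (Polynomial.C c) = Polynomial.C (algebraMap K KB c) := Polynomial.map_C _

lemma pb_multiset_prod (fs : Multiset (Polynomial K)) :
    pb fs.prod = (fs.map (fun h => pb h)).prod := by
  induction fs using Multiset.induction with
  | empty => simp [pb_one]
  | cons a t ih => simp [pb_mul, ih]

lemma factor_exists (q : Polynomial K) (hq : q ≠ 0) :
    ∃ (fs : Multiset (Polynomial K)),
      (∀ h ∈ fs, h.Monic ∧ Irreducible h) ∧ q = Polynomial.C q.leadingCoeff * fs.prod ∧
      (fs.map Polynomial.natDegree).sum = q.natDegree := by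
  classical
  set fs := UniqueFactorizationMonoid.normalizedFactors q with hfs
  have hmono : ∀ h ∈ fs, h.Monic ∧ Irreducible h := by
    intro h hh
    have hirr := UniqueFactorizationMonoid.irreducible_of_normalized_factor h hh
    have hnorm := UniqueFactorizationMonoid.normalize_normalized_factor h hh
    exact ⟨by rw [← hnorm]; exact Polynomial.monic_normalize hirr.ne_zero, hirr⟩
  have hassoc : Associated fs.prod q := UniqueFactorizationMonoid.prod_normalizedFactors hq
  obtain ⟨u, hu⟩ := hassoc
  obtain ⟨r, hr, hCr⟩ := Polynomial.isUnit_iff.mp u.isUnit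
  have hprodmonic : fs.prod.Monic := by
    have := Polynomial.monic_multiset_prod_of_monic fs id (fun h hh => (hmono h hh).1)
    simpa using this
  have hq' : q = Polynomial.C r * fs.prod := by rw [← hu, ← hCr]; ring
  have hrne : r ≠ 0 := hr.ne_zero
  have hlead : q.leadingCoeff = r := by
    rw [hq', Polynomial.leadingCoeff_mul, Polynomial.leadingCoeff_C,
      hprodmonic.leadingCoeff, mul_one]
  refine ⟨fs, hmono, by rw [hlead]; exact hq', ?_⟩
  have h0 : (0 : Polynomial K) ∉ fs := by
    intro h0
    exact (hmono 0 h0).2.ne_zero rfl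
  have hd : fs.prod.natDegree = (fs.map Polynomial.natDegree).sum :=
    Polynomial.natDegree_multiset_prod fs h0
  rw [hq', Polynomial.natDegree_C_mul hrne, hd]

lemma factor_exists_monic (q : Polynomial K) (hq : q.Monic) :
    ∃ (fs : Multiset (Polynomial K)),
      (∀ h ∈ fs, h.Monic ∧ Irreducible h) ∧ q = fs.prod ∧
      (fs.map Polynomial.natDegree).sum = q.natDegree := by
  obtain ⟨fs, h1, h2, h3⟩ := factor_exists q hq.ne_zero
  refine ⟨fs, h1, ?_, h3⟩
  rw [hq.leadingCoeff, Polynomial.C_1, one_mul] at h2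
  exact h2

lemma v_aeval_factored (c : K) (fs : Multiset (Polynomial K)) (x : KB) :
    S.v (Polynomial.aeval x (Polynomial.C c * fs.prod))
      = S.v (algebraMap K KB c) + (fs.map (fun h => S.v (Polynomial.aeval x h))).sum := by
  rw [map_mul, Polynomial.aeval_C, S.v_mul, map_multiset_prod (Polynomial.aeval x) fs]
  rw [v_prod S fs (fun h => Polynomial.aeval x h)]

lemma VP_factored (c : K) (fs : Multiset (Polynomial K)) :
    S.v (algebraMap K KB c) + (fs.map (fun h => VP S (pb h))).sum
      ≤ VP S (pb (Polynomial.C c * fs.prod)) := by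
  rw [pb_mul, pb_C, pb_multiset_prod]
  refine le_trans (add_le_add le_rfl ?_) (VP_C_mul S _ _)
  have := VP_multiset_prod S (fs.map (fun h => pb h))
  rw [Multiset.map_map] at this
  exact this

end OkutsuProof
set_option linter.unusedSectionVars false
set_option maxHeartbeats 1000000
namespace OkutsuProof
open Polynomial OkutsuSetup
variable {K : Type} [Field K] [CharZero K] (S : OkutsuSetup K)
local notation "KB" => AlgebraicClosure K

lemma forward
    (F : Polynomial S.integers) (hFmonic : F.Monic)
    (hFirr : Irreducible (F.map S.integers.subtype))
    {n : ℕ} (hFdeg : F.natDegree = n)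
    {θ : AlgebraicClosure K} (hθ : S.evalK F θ = 0)
    (D : OkutsuData S θ n)
    {i : ℕ} (hi1 : 1 ≤ i) (hi2 : i ≤ D.r)
    {Fi : Polynomial S.integers}
    {α : KB} (hαdeg : (minpoly K α).natDegree = D.m i) (hαv : S.v (θ - α) = D.μ i)
    (hαmin : Fi.map S.integers.subtype = minpoly K α)
    (g : Polynomial S.integers) (hgdeg : g.natDegree = D.m i) :
    S.v (S.evalK g θ) ≤ S.v (S.evalK Fi θ) + S.vPoly g := by
  classical
  have hi2' : i ≤ D.r + 1 := by omega
  have hn1 : 1 ≤ n := by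
    rw [← degθ hFmonic hFirr hθ hFdeg]
    exact minpoly.natDegree_pos (Algebra.IsAlgebraic.isAlgebraic θ).isIntegral
  have hm1 : 1 ≤ D.m i := m_pos D hi1 hi2'
  set V := Vv S F θ D i with hV
  have hFim : (gK S Fi) = minpoly K α := hαmin
  have hFimonic : (gK S Fi).Monic := by
    rw [hFim]; exact minpoly.monic (Algebra.IsAlgebraic.isAlgebraic α).isIntegral
  have hFiirr : Irreducible (gK S Fi) := by
    rw [hFim]; exact minpoly.irreducible (Algebra.IsAlgebraic.isAlgebraic α).isIntegral
  have hFideg : (gK S Fi).natDegree = D.m i := by rw [hFim, hαdeg]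
  have hαroot : α ∈ (pb (gK S Fi)).roots := by
    rw [mem_roots_pb hFimonic.ne_zero, hFim]
    exact minpoly.aeval K α
  have hID := ID_root hFmonic hFirr hθ hFdeg hFimonic hFiirr hαroot
  have hlemD := lemD D hFmonic hFirr hθ hi1 hi2' (le_of_eq hαdeg) hαv
  have hW : n • S.v (Polynomial.aeval θ (gK S Fi)) = (D.m i) • V := by
    rw [hID, hlemD, hFideg]
  have hg0 : gK S g ≠ 0 := by
    intro h0
    have h1 : (gK S g).natDegree = 0 := by rw [h0]; simp
    rw [gK_natDegree, hgdeg] at h1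
    omega
  obtain ⟨fs, hfs, hfact, hdegsum⟩ := factor_exists (gK S g) hg0
  rw [gK_natDegree, hgdeg] at hdegsum
  set c := (gK S g).leadingCoeff with hc
  have hperf : ∀ h ∈ fs, n • S.v (Polynomial.aeval θ h)
      ≤ n • VP S (pb h) + h.natDegree • V := by
    intro h hh
    have hdvd : h ∣ gK S g := by
      rw [hfact]; exact Dvd.dvd.mul_left (Multiset.dvd_prod hh) _
    have hdle : h.natDegree ≤ D.m i := by
      have := Polynomial.natDegree_le_of_dvd hdvd hg0
      rwa [gK_natDegree, hgdeg] at this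
    exact claim1 D hFmonic hFirr hθ hFdeg hi1 hi2' (hfs h hh).1 (hfs h hh).2 hdle
  have hevalg : S.v (Polynomial.aeval θ (gK S g))
      = S.v (algebraMap K KB c) + (fs.map (fun h => S.v (Polynomial.aeval θ h))).sum := by
    conv_lhs => rw [hfact]
    exact v_aeval_factored S c fs θ
  have hVP : S.v (algebraMap K KB c) + (fs.map (fun h => VP S (pb h))).sum ≤ S.vPoly g := by
    rw [vPoly_eq]
    calc S.v (algebraMap K KB c) + (fs.map (fun h => VP S (pb h))).sum
        ≤ VP S (pb (Polynomial.C c * fs.prod)) := VP_factored S c fs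
    _ = VP S (pb (gK S g)) := by rw [← hfact]
  have hsum : (fs.map (fun h => n • S.v (Polynomial.aeval θ h))).sum
      ≤ n • (fs.map (fun h => VP S (pb h))).sum + (D.m i) • V := by
    calc (fs.map (fun h => n • S.v (Polynomial.aeval θ h))).sum
        ≤ (fs.map (fun h => n • VP S (pb h) + h.natDegree • V)).sum :=
          sum_map_le _ _ _ hperf
    _ = (fs.map (fun h => n • VP S (pb h))).sum
          + (fs.map (fun h => h.natDegree • V)).sum := by
          rw [← Multiset.sum_map_add]
    _ = n • (fs.map (fun h => VP S (pb h))).sum + (D.m i) • V := by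
          rw [← nsmul_sum, sum_map_nsmul, hdegsum]
  have hmain : n • S.v (Polynomial.aeval θ (gK S g))
      ≤ n • (S.vPoly g + S.v (Polynomial.aeval θ (gK S Fi))) := by
    calc n • S.v (Polynomial.aeval θ (gK S g))
        = n • S.v (algebraMap K KB c)
          + (fs.map (fun h => n • S.v (Polynomial.aeval θ h))).sum := by
          rw [hevalg, smul_add, nsmul_sum]
    _ ≤ n • S.v (algebraMap K KB c)
          + (n • (fs.map (fun h => VP S (pb h))).sum + (D.m i) • V) :=
          add_le_add le_rfl hsum
    _ = n • (S.v (algebraMap K KB c) + (fs.map (fun h => VP S (pb h))).sum)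
          + (D.m i) • V := by
          rw [smul_add, add_assoc]
    _ ≤ n • S.vPoly g + n • S.v (Polynomial.aeval θ (gK S Fi)) :=
          add_le_add (nsmul_mono hVP) (le_of_eq hW.symm)
    _ = n • (S.vPoly g + S.v (Polynomial.aeval θ (gK S Fi))) := (smul_add _ _ _).symm
  have hfin := nsmul_le_cancel (by omega : 0 < n) hmain
  calc S.v (S.evalK g θ) ≤ S.vPoly g + S.v (Polynomial.aeval θ (gK S Fi)) := hfin
  _ = S.v (S.evalK Fi θ) + S.vPoly g := add_comm _ _

end OkutsuProof
set_option linter.unusedSectionVars false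
set_option maxHeartbeats 1000000
namespace OkutsuProof
open Polynomial OkutsuSetup
variable {K : Type} [Field K] [CharZero K] (S : OkutsuSetup K)
local notation "KB" => AlgebraicClosure K

lemma backward
    (F : Polynomial S.integers) (hFmonic : F.Monic)
    (hFirr : Irreducible (F.map S.integers.subtype))
    {n : ℕ} (hFdeg : F.natDegree = n)
    {θ : AlgebraicClosure K} (hθ : S.evalK F θ = 0)
    (D : OkutsuData S θ n)
    {i : ℕ} (hi1 : 1 ≤ i) (hi2 : i ≤ D.r)
    {Fi : Polynomial S.integers} (hFiMonic : Fi.Monic) (hFiDeg : Fi.natDegree = D.m i)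
    (hdiv : ∀ g : Polynomial S.integers, g.natDegree = D.m i →
      S.v (S.evalK g θ) ≤ S.v (S.evalK Fi θ) + S.vPoly g) :
    ∃ α : AlgebraicClosure K, (minpoly K α).natDegree = D.m i ∧ S.v (θ - α) = D.μ i ∧
      Fi.map S.integers.subtype = minpoly K α := by
  classical
  have hi2' : i ≤ D.r + 1 := by omega
  have hn1 : 1 ≤ n := by
    rw [← degθ hFmonic hFirr hθ hFdeg]
    exact minpoly.natDegree_pos (Algebra.IsAlgebraic.isAlgebraic θ).isIntegral
  have hm1 : 1 ≤ D.m i := m_pos D hi1 hi2'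
  set V := Vv S F θ D i with hVdef
  obtain ⟨α, hαdeg, hαv⟩ := (D.mu_isGreatest i hi1 hi2').1
  set p := minpoly K α with hp
  have hα_int : IsIntegral K α := (Algebra.IsAlgebraic.isAlgebraic α).isIntegral
  have hpmonic : p.Monic := minpoly.monic hα_int
  have hpirr : Irreducible p := minpoly.irreducible hα_int
  have hαv0 : 0 ≤ S.v α := by
    have h1 := v_sub_min S θ (θ - α)
    have h2 : θ - (θ - α) = α := by ring
    rw [h2] at h1
    refine le_trans (le_min (vθ_nonneg hFmonic hθ) ?_) h1
    rw [hαv]; exact mu_nonneg D i hi2'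
  have hαroot : α ∈ (pb p).roots := by
    rw [mem_roots_pb hpmonic.ne_zero]; exact minpoly.aeval K α
  have hrootsv : ∀ b ∈ (pb p).roots, 0 ≤ S.v b := by
    intro b hb
    rw [v_conj S (x := b) (y := α)
      ((mem_roots_pb hpmonic.ne_zero).mp hb)]
    exact hαv0
  have hcoeff : ∀ j, 0 ≤ S.v ((pb p).coeff j) := by
    intro j
    have hcb := coeff_prod_bound S (pb p).roots 0 le_rfl hrootsv j
    rw [smul_zero] at hcb
    rw [pb_eq_prod hpmonic]
    exact hcb
  have hsub : (↑p.coeffs : Set K) ⊆ S.integers := by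
    intro x hx
    rw [Finset.mem_coe, Polynomial.mem_coeffs_iff] at hx
    obtain ⟨j, _, rfl⟩ := hx
    show 0 ≤ S.vK (p.coeff j)
    have hcj := hcoeff j
    rwa [pb, Polynomial.coeff_map] at hcj
  set G := p.toSubring S.integers hsub with hG
  have hGmap : gK S G = p := Polynomial.map_toSubring p S.integers hsub
  have hGdeg : G.natDegree = D.m i := by
    have h1 : (gK S G).natDegree = G.natDegree := gK_natDegree S G
    rw [hGmap] at h1
    rw [← h1, hαdeg]
  have hGv := hdiv G hGdeg
  have hvPolyG : S.vPoly G ≤ 0 := by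
    rw [vPoly_eq, hGmap]
    refine le_trans (VP_le_coeff S (pb p) (pb p).natDegree) ?_
    rw [(pb_monic hpmonic).coeff_natDegree, S.v_one]
  set W := S.v (S.evalK Fi θ) with hWdef
  have hGW : S.v (Polynomial.aeval θ p) ≤ W := by
    have he : S.evalK G θ = Polynomial.aeval θ p := by rw [evalK_eq, hGmap]
    calc S.v (Polynomial.aeval θ p) = S.v (S.evalK G θ) := by rw [he]
    _ ≤ W + S.vPoly G := hGv
    _ ≤ W + 0 := add_le_add le_rfl hvPolyG
    _ = W := add_zero W
  have hIDp := ID_root hFmonic hFirr hθ hFdeg hpmonic hpirr hαroot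
  have hlemDp := lemD D hFmonic hFirr hθ hi1 hi2' (le_of_eq hαdeg) hαv
  have hmV_le : (D.m i) • V ≤ n • W := by
    calc (D.m i) • V = n • S.v (Polynomial.aeval θ p) := by
          rw [hIDp, hlemDp, hαdeg]
    _ ≤ n • W := nsmul_mono hGW
  have hqmonic : (gK S Fi).Monic := hFiMonic.map _
  have hqdeg : (gK S Fi).natDegree = D.m i := by rw [gK_natDegree, hFiDeg]
  obtain ⟨fs, hfs, hfact, hdegsum⟩ := factor_exists_monic (gK S Fi) hqmonic
  rw [hqdeg] at hdegsum
  have hWeval : W = (fs.map (fun h => S.v (Polynomial.aeval θ h))).sum := by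
    rw [hWdef, evalK_eq]
    conv_lhs => rw [hfact]
    rw [map_multiset_prod (Polynomial.aeval θ) fs, v_prod S fs (fun h => Polynomial.aeval θ h)]
  have hdledeg : ∀ h ∈ fs, h.natDegree ≤ D.m i := by
    intro h hh
    have hdvd : h ∣ gK S Fi := by rw [hfact]; exact Multiset.dvd_prod hh
    have := Polynomial.natDegree_le_of_dvd hdvd hqmonic.ne_zero
    rwa [hqdeg] at this
  have hfg : ∀ h ∈ fs, n • S.v (Polynomial.aeval θ h) ≤ h.natDegree • V := by
    intro h hh
    have hmon := (hfs h hh).1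
    have hirr := (hfs h hh).2
    have hcard : Multiset.card (pb h).roots = h.natDegree := card_roots_pb hmon
    have hd1 : 1 ≤ h.natDegree := hirr.natDegree_pos
    have hroots_ne : (pb h).roots ≠ 0 := by
      intro h0; rw [h0] at hcard; simp at hcard; omega
    obtain ⟨b₀, hb₀⟩ := Multiset.exists_mem_of_ne_zero hroots_ne
    have hminb : minpoly K b₀ = h := minpoly_root hirr hmon hb₀
    have hIDh := ID_root hFmonic hFirr hθ hFdeg hmon hirr hb₀
    have hC := lemC D hFmonic hFirr hθ hFdeg hi1 hi2'
      (by rw [hminb]; exact hdledeg h hh)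
    rw [hIDh]
    exact nsmul_mono hC
  have hsumf : (fs.map (fun h => n • S.v (Polynomial.aeval θ h))).sum = n • W := by
    rw [hWeval, nsmul_sum]
  have hsumg : (fs.map (fun h => h.natDegree • V)).sum = (D.m i) • V := by
    rw [sum_map_nsmul, hdegsum]
  have hVfin : V ≠ ⊤ := V_ne_top D hFmonic hFirr hθ hFdeg hi1 hi2
  have hsumgfin : (fs.map (fun h => h.natDegree • V)).sum ≠ ⊤ := by
    rw [hsumg]
    obtain ⟨q, hq⟩ : ∃ q : ℚ, V = (q : WithTop ℚ) := by
      cases hv : V with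
      | top => exact absurd hv hVfin
      | coe q => exact ⟨q, rfl⟩
    rw [hq, ← WithTop.coe_nsmul]
    exact WithTop.coe_ne_top
  have hforce : ∀ h ∈ fs, n • S.v (Polynomial.aeval θ h) = h.natDegree • V := by
    apply sum_eq_forces fs _ _ hfg
    · rw [hsumf, hsumg]; exact hmV_le
    · exact hsumgfin
  have hbig : ∀ h ∈ fs, D.m i ≤ h.natDegree
      ∧ ∃ β', minpoly K β' = h ∧ S.v (θ - β') = D.μ i := by
    intro h hh
    have hmon := (hfs h hh).1
    have hirr := (hfs h hh).2
    have hcard : Multiset.card (pb h).roots = h.natDegree := card_roots_pb hmon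
    have hd1 : 1 ≤ h.natDegree := hirr.natDegree_pos
    have hroots_ne : (pb h).roots ≠ 0 := by
      intro h0; rw [h0] at hcard; simp at hcard; omega
    obtain ⟨b₀, hb₀⟩ := Multiset.exists_mem_of_ne_zero hroots_ne
    have hminb : minpoly K b₀ = h := minpoly_root hirr hmon hb₀
    have hIDh := ID_root hFmonic hFirr hθ hFdeg hmon hirr hb₀
    have heq : h.natDegree • S.v (Polynomial.aeval b₀ (gK S F)) = h.natDegree • V := by
      rw [← hIDh]; exact hforce h hh
    have hVb : S.v (Polynomial.aeval b₀ (gK S F)) = V :=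
      nsmul_eq_cancel (by omega) heq
    obtain ⟨β', hβ'min, hβ'v⟩ := eq_analysis D hFmonic hFirr hθ hFdeg hi1 hi2
      (by rw [hminb]; exact hdledeg h hh) hVb
    rw [hminb] at hβ'min
    constructor
    · have hmem : h.natDegree ∈ {d : ℕ | ∃ η : KB,
          (minpoly K η).natDegree = d ∧ D.μ (i - 1) < S.v (θ - η)} := by
        refine ⟨β', by rw [hβ'min], ?_⟩
        rw [hβ'v]
        exact mu_lt D hi1 hi2'
      exact (D.m_isLeast i hi1 hi2').2 hmem
    · exact ⟨β', hβ'min, hβ'v⟩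
  have hone : ∃ h, fs = {h} := by
    rcases Multiset.empty_or_exists_mem fs with h0 | ⟨h, hh⟩
    · exfalso
      rw [h0] at hdegsum
      simp at hdegsum
      omega
    · obtain ⟨t, rfl⟩ := Multiset.exists_cons_of_mem hh
      rcases Multiset.empty_or_exists_mem t with h0 | ⟨h2, hh2⟩
      · exact ⟨h, by rw [h0]; rfl⟩
      · exfalso
        have hd2 : D.m i ≤ h2.natDegree :=
          (hbig h2 (Multiset.mem_cons_of_mem hh2)).1
        have hdh : D.m i ≤ h.natDegree := (hbig h (Multiset.mem_cons_self h t)).1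
        have hsum2 : h2.natDegree ≤ (t.map Polynomial.natDegree).sum :=
          Multiset.le_sum_of_mem (Multiset.mem_map_of_mem _ hh2)
        rw [Multiset.map_cons, Multiset.sum_cons] at hdegsum
        omega
  obtain ⟨h, rfl⟩ := hone
  have hhfs : h ∈ ({h} : Multiset (Polynomial K)) := Multiset.mem_singleton_self h
  obtain ⟨_, β', hβ'min, hβ'v⟩ := hbig h hhfs
  have hqh : gK S Fi = h := by
    rw [hfact, Multiset.prod_singleton]
  have hhdeg : h.natDegree = D.m i := by
    rw [← hqdeg, hqh]
  exact ⟨β', by rw [hβ'min, hhdeg], hβ'v, by rw [show Fi.map S.integers.subtype = gK S Fi from rfl, hqh, hβ'min]⟩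

end OkutsuProof
open OkutsuSetup in
/-- Let `F ∈ 𝓞[x]` be monic irreducible of degree `n` with root `θ`,
of depth `r`, with Okutsu degrees `m_1 < ⋯ < m_r < n`.  Let `F_1, …, F_r ∈ 𝓞[x]` be monic
polynomials with `deg F_i = m_i`.  Then `[F_1, …, F_r]` is an Okutsu frame of `F` iff each
`F_i` is a divisor polynomial of `F` of degree `m_i`. -/
theorem okutsu_stmt_13 {K : Type} [Field K] [CharZero K] (S : OkutsuSetup K)
    (F : Polynomial S.integers) (hFmonic : F.Monic)
    (hFirr : Irreducible (F.map S.integers.subtype))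
    (n : ℕ) (hFdeg : F.natDegree = n)
    (θ : AlgebraicClosure K) (hθ : S.evalK F θ = 0)
    (D : OkutsuData S θ n)
    (Fr : ℕ → Polynomial S.integers)
    (hFrMonic : ∀ i, 1 ≤ i → i ≤ D.r → (Fr i).Monic)
    (hFrDeg : ∀ i, 1 ≤ i → i ≤ D.r → (Fr i).natDegree = D.m i) :
    S.IsFrame D Fr ↔
      ∀ i, 1 ≤ i → i ≤ D.r → ∀ g : Polynomial S.integers, g.natDegree = D.m i →
        S.v (S.evalK g θ) ≤ S.v (S.evalK (Fr i) θ) + S.vPoly g := by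
  constructor
  · intro hFrame i hi1 hi2 g hgdeg
    obtain ⟨α, hαdeg, hαv, hαmin⟩ := hFrame i hi1 hi2
    exact OkutsuProof.forward S F hFmonic hFirr hFdeg hθ D hi1 hi2 hαdeg hαv hαmin g hgdeg
  · intro hdiv i hi1 hi2
    exact OkutsuProof.backward S F hFmonic hFirr hFdeg hθ D hi1 hi2
      (hFrMonic i hi1 hi2) (hFrDeg i hi1 hi2) (hdiv i hi1 hi2)
end
end

section
/- Let F(x) ∈ 𝓞[x] be a monic irreducible polynomial with root θ ∈ K̄, of depth r. If [F_1, …, F_r] and [F'_1, …, F'_r] are two Okutsu frames of F, then v(F_i(θ)) = v(F'_i(θ)) for every 1 ≤ i ≤ r; that is, the rational numbers 0 < v(F_1(θ)) < ⋯ < v(F_r(θ)) depend only on F(x). -/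
open Polynomial

noncomputable section

section Aux

namespace OkutsuSetup

variable {K : Type} [Field K] [CharZero K] (S : OkutsuSetup K)

lemma v_zero' : S.v 0 = ⊤ := (S.v_eq_top_iff 0).mpr rfl

lemma v_sub_ge (x y : AlgebraicClosure K) : min (S.v x) (S.v y) ≤ S.v (x - y) := by
  have h := S.v_min_le_add x (-y)
  rwa [S.v_neg y, ← sub_eq_add_neg] at h

lemma v_add_eq_left {x y : AlgebraicClosure K} (h : S.v x < S.v y) :
    S.v (x + y) = S.v x := by
  refine le_antisymm ?_ ?_
  · by_contra hc
    push_neg at hc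
    have h2 : min (S.v (x + y)) (S.v y) ≤ S.v x := by
      have h3 := S.v_sub_ge (x + y) y
      rwa [add_sub_cancel_right] at h3
    exact absurd (lt_min hc h) (not_lt.mpr h2)
  · exact le_trans (min_eq_left h.le).symm.le (S.v_min_le_add x y)

lemma v_prod (s : Multiset (AlgebraicClosure K)) :
    S.v s.prod = (s.map S.v).sum := by
  induction s using Multiset.induction_on with
  | empty => simpa using S.v_one
  | cons a s ih => rw [Multiset.prod_cons, S.v_mul, Multiset.map_cons, Multiset.sum_cons, ih]

/-- ultrametric technical lemma: adding two terms of value `≥ μ` does not change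
`min μ (v ·)`. -/
lemma v_min_conj {μ : WithTop ℚ} {u w z : AlgebraicClosure K}
    (hu : μ ≤ S.v u) (hz : μ ≤ S.v z) :
    min μ (S.v (u + w + z)) = min μ (S.v w) := by
  rcases le_or_gt μ (S.v w) with h | h
  · rw [min_eq_left h, min_eq_left]
    calc μ ≤ min (min (S.v u) (S.v w)) (S.v z) := le_min (le_min hu h) hz
    _ ≤ min (S.v (u + w)) (S.v z) := min_le_min_right _ (S.v_min_le_add u w)
    _ ≤ S.v (u + w + z) := S.v_min_le_add _ _
  · have h1 : S.v (u + w) = S.v w := by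
      rw [add_comm u w]; exact S.v_add_eq_left (lt_of_lt_of_le h hu)
    have h2 : S.v (u + w + z) = S.v w := by
      rw [S.v_add_eq_left (by rw [h1]; exact lt_of_lt_of_le h hz), h1]
    rw [h2]

/-- Key counting lemma: the valuation of `minpoly K y` evaluated at `θ`, multiplied by the
number of automorphisms of `M` fixing `y`, equals the sum over all automorphisms `σ` of
`g (σ y)`, whenever `g` computes `v (θ - β)` at every conjugate `β` of `y`. -/
lemma okutsu_key (M : IntermediateField K (AlgebraicClosure K))
    [FiniteDimensional K (↥M)] [Normal K (↥M)]
    (θ : AlgebraicClosure K) (y : ↥M) (g : ↥M → WithTop ℚ)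
    (hg : ∀ β : ↥M,
      Polynomial.aeval (β : AlgebraicClosure K) (minpoly K (y : AlgebraicClosure K)) = 0 →
      S.v (θ - (β : AlgebraicClosure K)) = g β) :
    ∃ c : ℕ, c * (minpoly K (y : AlgebraicClosure K)).natDegree
        = Fintype.card (↥M ≃ₐ[K] ↥M) ∧
      c • S.v (Polynomial.aeval θ (minpoly K (y : AlgebraicClosure K)))
        = ∑ σ : ↥M ≃ₐ[K] ↥M, g (σ y) := by
  classical
  have hyint : IsIntegral K (y : AlgebraicClosure K) :=
    (IsIntegral.of_finite K y).map M.val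
  set f : Polynomial K := minpoly K (y : AlgebraicClosure K) with hf
  have hminyM : minpoly K y = f := (minpoly.algHom_eq M.val Subtype.val_injective y).symm
  have hfm : f.Monic := minpoly.monic hyint
  have hirr : Irreducible f := minpoly.irreducible hyint
  have hsep : f.Separable := hirr.separable
  have hsplitM : (f.map (algebraMap K (↥M))).Splits := by
    have h := Normal.splits (inferInstance : Normal K (↥M)) y
    rwa [hminyM] at h
  set fM : Polynomial (↥M) := f.map (algebraMap K (↥M)) with hfM
  set R : Multiset (↥M) := fM.roots with hR
  have hfM0 : fM ≠ 0 := (hfm.map _).ne_zero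
  have hndup : R.Nodup := Polynomial.nodup_roots (hsep.map (f := algebraMap K (↥M)))
  have hcardR : R.card = f.natDegree := by
    rw [← Polynomial.natDegree_map (f := algebraMap K (↥M)) (p := f)]; exact hsplitM.natDegree_eq_card_roots.symm
  have hroot_aeval : ∀ β ∈ R, Polynomial.aeval (β : AlgebraicClosure K) f = 0 := by
    intro β hβ
    have h1 : Polynomial.aeval β f = 0 := by
      have h2 := (Polynomial.mem_roots'.mp hβ).2
      rwa [Polynomial.IsRoot, Polynomial.eval_map, ← Polynomial.aeval_def] at h2
    have h3 := Polynomial.aeval_algHom_apply M.val β f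
    rw [h1, map_zero] at h3
    exact h3
  -- the evaluated product formula
  have hprodK : f.map (algebraMap K (AlgebraicClosure K))
      = (R.map (fun β => X - C ((β : ↥M) : AlgebraicClosure K))).prod := by
    have h1 : fM = (R.map fun a => X - C a).prod :=
      hsplitM.eq_prod_roots_of_monic (hfm.map _)
    have h2 : f.map (algebraMap K (AlgebraicClosure K)) = fM.map (algebraMap (↥M) (AlgebraicClosure K)) := by
      rw [hfM, Polynomial.map_map, ← IsScalarTower.algebraMap_eq]
    rw [h2, h1, Polynomial.map_multiset_prod, Multiset.map_map]
    congr 1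
    apply Multiset.map_congr rfl
    intro β _
    simp [Polynomial.map_sub]
  have heval : Polynomial.aeval θ f = (R.map (fun β => θ - ((β : ↥M) : AlgebraicClosure K))).prod := by
    rw [Polynomial.aeval_def, ← Polynomial.eval_map, hprodK, Polynomial.eval_multiset_prod,
      Multiset.map_map]
    congr 1
    apply Multiset.map_congr rfl
    intro β _
    simp
  have hvA : S.v (Polynomial.aeval θ f)
      = (R.map (fun β : ↥M => S.v (θ - (β : AlgebraicClosure K)))).sum := by
    rw [heval, S.v_prod, Multiset.map_map]
    rfl
  have hgR : (R.map (fun β : ↥M => S.v (θ - (β : AlgebraicClosure K)))) = R.map g :=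
    Multiset.map_congr rfl (fun β hβ => hg β (hroot_aeval β hβ))
  -- orbit facts
  have horbit : ∀ σ : ↥M ≃ₐ[K] ↥M, σ y ∈ R := by
    intro σ
    have h1 : Polynomial.aeval (σ y) f = 0 := by
      have h2 : Polynomial.aeval y f = 0 := by rw [← hminyM]; exact minpoly.aeval K y
      have h3 := Polynomial.aeval_algHom_apply σ.toAlgHom y f
      rw [h2, map_zero] at h3
      exact h3
    rw [hR, Polynomial.mem_roots']
    refine ⟨hfM0, ?_⟩
    rwa [Polynomial.IsRoot, Polynomial.eval_map, ← Polynomial.aeval_def]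
  have himg : (Finset.univ.image (fun σ : ↥M ≃ₐ[K] ↥M => σ y)) = R.toFinset := by
    ext b
    simp only [Finset.mem_image, Multiset.mem_toFinset, Finset.mem_univ, true_and]
    constructor
    · rintro ⟨σ, rfl⟩; exact horbit σ
    · intro hb
      have h1 : Polynomial.aeval b (minpoly K y) = 0 := by
        rw [hminyM]
        have h2 := (Polynomial.mem_roots'.mp hb).2
        rwa [Polynomial.IsRoot, Polynomial.eval_map, ← Polynomial.aeval_def] at h2
      exact minpoly.exists_algEquiv_of_root' (IsIntegral.of_finite K y).isAlgebraic h1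
  set c : ℕ := (Finset.univ.filter (fun σ : ↥M ≃ₐ[K] ↥M => σ y = y)).card with hc
  have hfib : ∀ τ : ↥M ≃ₐ[K] ↥M,
      (Finset.univ.filter (fun σ : ↥M ≃ₐ[K] ↥M => σ y = τ y)).card = c := by
    intro τ
    rw [hc]
    apply Finset.card_bij' (fun σ _ => τ⁻¹ * σ) (fun σ _ => τ * σ)
    · intro σ hσ
      simp only [Finset.mem_filter, Finset.mem_univ, true_and] at hσ ⊢
      rw [AlgEquiv.mul_apply, hσ]
      exact AlgEquiv.symm_apply_apply τ y
    · intro σ hσ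
      simp only [Finset.mem_filter, Finset.mem_univ, true_and] at hσ ⊢
      rw [AlgEquiv.mul_apply, hσ]
    · intro σ _; exact mul_inv_cancel_left τ σ
    · intro σ _; exact inv_mul_cancel_left τ σ
  have hmaps : ∀ σ : ↥M ≃ₐ[K] ↥M, σ ∈ Finset.univ → σ y ∈ R.toFinset := by
    intro σ _; exact Multiset.mem_toFinset.mpr (horbit σ)
  have hcount : Fintype.card (↥M ≃ₐ[K] ↥M) = R.toFinset.card * c := by
    rw [← Finset.card_univ, Finset.card_eq_sum_card_fiberwise hmaps]
    rw [Finset.sum_congr rfl (fun b _ => ?_), Finset.sum_const, smul_eq_mul]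
    obtain ⟨τ, _, rfl⟩ := Finset.mem_image.mp (himg ▸ (by assumption : b ∈ R.toFinset))
    exact hfib τ
  have htf : R.toFinset.card = f.natDegree := by
    rw [Multiset.toFinset_card_of_nodup hndup, hcardR]
  refine ⟨c, ?_, ?_⟩
  · rw [hcount, htf, mul_comm]
  · -- the sum computation
    have hsum : ∑ σ : ↥M ≃ₐ[K] ↥M, g (σ y) = ∑ b ∈ R.toFinset, c • g b := by
      rw [← Finset.sum_fiberwise_of_maps_to hmaps (fun σ => g (σ y))]
      refine Finset.sum_congr rfl (fun b hb => ?_)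
      obtain ⟨τ, _, rfl⟩ := Finset.mem_image.mp (himg ▸ hb)
      rw [Finset.sum_congr rfl (fun σ hσ => ?_), Finset.sum_const, hfib τ]
      have hσ2 := (Finset.mem_filter.mp hσ).2
      rw [hσ2]
    have hfinsum : ∑ b ∈ R.toFinset, g b = (R.map g).sum := by
      rw [Finset.sum_eq_multiset_sum]
      congr 1
      rw [Multiset.toFinset_val, hndup.dedup]
    rw [hsum, ← Finset.smul_sum, hfinsum, hvA, hgR]

end OkutsuSetup

end Aux


section Main

namespace OkutsuSetup

variable {K : Type} [Field K] [CharZero K] (S : OkutsuSetup K)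

lemma nsmul_coe_withTop (c : ℕ) (q : ℚ) :
    c • ((q : ℚ) : WithTop ℚ) = (((c : ℚ) * q : ℚ) : WithTop ℚ) := by
  induction c with
  | zero => simp
  | succ k ih =>
    rw [succ_nsmul, ih, ← WithTop.coe_add]
    congr 1
    push_cast
    ring

lemma okutsu_main (θ : AlgebraicClosure K) {n : ℕ} (D : OkutsuData S θ n)
    (hθn : n ≤ (minpoly K θ).natDegree)
    {i : ℕ} (hi1 : 1 ≤ i) (hir : i ≤ D.r)
    (α α' : AlgebraicClosure K)
    (hd : (minpoly K α).natDegree = D.m i) (hd' : (minpoly K α').natDegree = D.m i)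
    (hv : S.v (θ - α) = D.μ i) (hv' : S.v (θ - α') = D.μ i) :
    S.v (Polynomial.aeval θ (minpoly K α)) = S.v (Polynomial.aeval θ (minpoly K α')) := by
  classical
  have hi2 : i ≤ D.r + 1 := hir.trans (Nat.le_succ _)
  have hintα : IsIntegral K α := Algebra.IsIntegral.isIntegral α
  have hintα' : IsIntegral K α' := Algebra.IsIntegral.isIntegral α'
  have hmpos : 0 < D.m i := hd ▸ minpoly.natDegree_pos hintα
  -- Lemma A: the valuation of `θ - β` at any conjugate `β` of an optimal element `γ`
  have lemA : ∀ (β γ : AlgebraicClosure K), (minpoly K γ).natDegree = D.m i →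
      S.v (θ - γ) = D.μ i → minpoly K β = minpoly K γ →
      S.v (θ - β) = min (D.μ i) (S.v (γ - β)) := by
    intro β γ hdγ hvγ hmin
    have hub : S.v (θ - β) ≤ D.μ i :=
      (D.mu_isGreatest i hi1 hi2).2 ⟨β, by rw [hmin, hdγ], rfl⟩
    have hlb : min (D.μ i) (S.v (γ - β)) ≤ S.v (θ - β) := by
      have h := S.v_min_le_add (θ - γ) (γ - β)
      rwa [sub_add_sub_cancel, hvγ] at h
    rcases le_or_gt (D.μ i) (S.v (γ - β)) with h | h
    · rw [min_eq_left h]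
      exact le_antisymm hub (by rwa [min_eq_left h] at hlb)
    · rw [min_eq_right h.le]
      have h2 : S.v ((γ - β) + (θ - γ)) = S.v (γ - β) :=
        S.v_add_eq_left (by rw [hvγ]; exact h)
      rw [add_comm] at h2
      rwa [sub_add_sub_cancel] at h2
  have h_up : D.μ i ≤ S.v (α - α') := by
    have h := S.v_sub_ge (θ - α') (θ - α)
    rw [hv, hv', min_self] at h
    have he : (θ - α') - (θ - α) = α - α' := by ring
    rwa [he] at h
  -- the ambient finite normal extension
  set M : IntermediateField K (AlgebraicClosure K) :=
    IntermediateField.normalClosure K (↥(IntermediateField.adjoin K {α, α'})) (AlgebraicClosure K) with hM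
  haveI : FiniteDimensional K (↥(IntermediateField.adjoin K ({α, α'} : Set (AlgebraicClosure K)))) :=
    IntermediateField.finiteDimensional_adjoin (fun x _ => Algebra.IsIntegral.isIntegral x)
  have hsub : IntermediateField.adjoin K ({α, α'} : Set (AlgebraicClosure K)) ≤ M :=
    IntermediateField.le_normalClosure _
  have hαM : α ∈ M := hsub (IntermediateField.subset_adjoin K {α, α'} (by simp))
  have hα'M : α' ∈ M := hsub (IntermediateField.subset_adjoin K {α, α'} (by simp))
  haveI : Nonempty ((↥M) ≃ₐ[K] (↥M)) := ⟨AlgEquiv.refl⟩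
  obtain ⟨c, hcard, hcsum⟩ := S.okutsu_key M θ ⟨α, hαM⟩
    (fun β => min (D.μ i) (S.v (α - (β : AlgebraicClosure K))))
    (fun β hβ => lemA _ α hd hv
      (minpoly.eq_of_irreducible_of_monic (minpoly.irreducible hintα) hβ (minpoly.monic hintα)).symm)
  obtain ⟨c', hcard', hcsum'⟩ := S.okutsu_key M θ ⟨α', hα'M⟩
    (fun β => min (D.μ i) (S.v (α' - (β : AlgebraicClosure K))))
    (fun β hβ => lemA _ α' hd' hv'
      (minpoly.eq_of_irreducible_of_monic (minpoly.irreducible hintα') hβ (minpoly.monic hintα')).symm)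
  have hxcoe : (((⟨α, hαM⟩ : ↥M) : AlgebraicClosure K)) = α := rfl
  have hx'coe : (((⟨α', hα'M⟩ : ↥M) : AlgebraicClosure K)) = α' := rfl
  rw [hxcoe] at hcard hcsum
  rw [hx'coe] at hcard' hcsum'
  have hcc : c = c' := by
    apply Nat.eq_of_mul_eq_mul_right hmpos
    rw [← hd, hcard, ← hcard', hd, hd']
  -- termwise comparison of the two sums
  have hterm : ∀ σ : (↥M) ≃ₐ[K] (↥M),
      min (D.μ i) (S.v (α - ((σ ⟨α, hαM⟩ : ↥M) : AlgebraicClosure K)))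
      = min (D.μ i) (S.v (α' - ((σ ⟨α', hα'M⟩ : ↥M) : AlgebraicClosure K))) := by
    intro σ
    have hinv := S.v_aut_invariant M σ (⟨α, hαM⟩ - ⟨α', hα'M⟩)
    have hsub1 : ((σ ((⟨α, hαM⟩ : ↥M) - ⟨α', hα'M⟩) : ↥M) : AlgebraicClosure K)
        = ((σ ⟨α, hαM⟩ : ↥M) : AlgebraicClosure K) - ((σ ⟨α', hα'M⟩ : ↥M) : AlgebraicClosure K) := by
      rw [map_sub]; rfl
    have hsub2 : (((⟨α, hαM⟩ : ↥M) - ⟨α', hα'M⟩ : ↥M) : AlgebraicClosure K) = α - α' := rfl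
    rw [hsub1, hsub2] at hinv
    have hz : D.μ i ≤ S.v (((σ ⟨α', hα'M⟩ : ↥M) : AlgebraicClosure K)
        - ((σ ⟨α, hαM⟩ : ↥M) : AlgebraicClosure K)) := by
      rw [← S.v_neg, neg_sub, hinv]
      exact h_up
    have heq : α - ((σ ⟨α, hαM⟩ : ↥M) : AlgebraicClosure K)
        = (α - α') + (α' - ((σ ⟨α', hα'M⟩ : ↥M) : AlgebraicClosure K))
          + (((σ ⟨α', hα'M⟩ : ↥M) : AlgebraicClosure K)
            - ((σ ⟨α, hαM⟩ : ↥M) : AlgebraicClosure K)) := by ring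
    rw [heq]
    exact S.v_min_conj h_up hz
  have hceq : c • S.v (Polynomial.aeval θ (minpoly K α))
      = c • S.v (Polynomial.aeval θ (minpoly K α')) := by
    rw [hcsum, hcc, hcsum']
    exact Finset.sum_congr rfl (fun σ _ => hterm σ)
  -- cancel the positive factor c
  have hc0 : c ≠ 0 := by
    intro h0
    rw [h0, zero_mul] at hcard
    exact absurd hcard.symm Fintype.card_ne_zero
  have hAne : Polynomial.aeval θ (minpoly K α) ≠ 0 := by
    intro h0
    have hdvd := minpoly.dvd K θ h0
    have hle := Polynomial.natDegree_le_of_dvd hdvd (minpoly.ne_zero hintα)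
    rw [hd] at hle
    have hlt := D.m_lt_n i hi1 hir
    omega
  have hA'ne : Polynomial.aeval θ (minpoly K α') ≠ 0 := by
    intro h0
    have hdvd := minpoly.dvd K θ h0
    have hle := Polynomial.natDegree_le_of_dvd hdvd (minpoly.ne_zero hintα')
    rw [hd'] at hle
    have hlt := D.m_lt_n i hi1 hir
    omega
  have hvAne : S.v (Polynomial.aeval θ (minpoly K α)) ≠ ⊤ :=
    fun h => hAne ((S.v_eq_top_iff _).mp h)
  have hvA'ne : S.v (Polynomial.aeval θ (minpoly K α')) ≠ ⊤ :=
    fun h => hA'ne ((S.v_eq_top_iff _).mp h)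
  obtain ⟨qa, hqa⟩ := WithTop.ne_top_iff_exists.mp hvAne
  obtain ⟨qb, hqb⟩ := WithTop.ne_top_iff_exists.mp hvA'ne
  rw [← hqa, ← hqb] at hceq ⊢
  rw [nsmul_coe_withTop, nsmul_coe_withTop, WithTop.coe_inj] at hceq
  have : qa = qb := mul_left_cancel₀ (by exact_mod_cast hc0) hceq
  rw [this]

end OkutsuSetup

end Main

open OkutsuSetup in
/-- Let `F ∈ 𝓞[x]` be monic irreducible with root `θ`, of depth `r`.
If `[F_1, …, F_r]` and `[F'_1, …, F'_r]` are two Okutsu frames of `F`, then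
`v(F_i(θ)) = v(F'_i(θ))` for every `1 ≤ i ≤ r`; that is, the rational numbers
`0 < v(F_1(θ)) < ⋯ < v(F_r(θ))` depend only on `F`. -/
theorem okutsu_stmt_14 {K : Type} [Field K] [CharZero K] (S : OkutsuSetup K)
    (F : Polynomial S.integers) (hFmonic : F.Monic)
    (hFirr : Irreducible (F.map S.integers.subtype))
    (n : ℕ) (hFdeg : F.natDegree = n)
    (θ : AlgebraicClosure K) (hθ : S.evalK F θ = 0)
    (D : OkutsuData S θ n)
    (Fr Fr' : ℕ → Polynomial S.integers)
    (hFr : S.IsFrame D Fr) (hFr' : S.IsFrame D Fr') :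
    ∀ i, 1 ≤ i → i ≤ D.r → S.v (S.evalK (Fr i) θ) = S.v (S.evalK (Fr' i) θ) := by
  intro i hi1 hir
  obtain ⟨α, hd, hv, hF⟩ := hFr i hi1 hir
  obtain ⟨α', hd', hv', hF'⟩ := hFr' i hi1 hir
  have hθmin : minpoly K θ = F.map S.integers.subtype :=
    (minpoly.eq_of_irreducible_of_monic hFirr hθ (hFmonic.map _)).symm
  have hθn : n ≤ (minpoly K θ).natDegree := by
    rw [hθmin, hFmonic.natDegree_map, hFdeg]
  show S.v (Polynomial.aeval θ ((Fr i).map S.integers.subtype))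
      = S.v (Polynomial.aeval θ ((Fr' i).map S.integers.subtype))
  rw [hF, hF']
  exact S.okutsu_main θ D hθn hi1 hir α α' hd hd' hv hv'
end
end

section
/- Let F(x) ∈ 𝓞[x] be a monic irreducible polynomial of degree n with root θ ∈ K̄, of depth r, with Okutsu invariants m_i, μ_i and an Okutsu frame whose last polynomial is F_r(x). For a polynomial φ(x) ∈ 𝓞[x], the following two conditions are equivalent: (i) φ(x) is monic irreducible of degree n and has a root α ∈ K̄ with v(θ − α) > μ_r; (ii) φ(x) is monic irreducible of degree n and v(φ(θ)) > (n/m_r) · v(F_r(θ)). -/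
open Polynomial

noncomputable section

set_option linter.unusedSectionVars false
namespace OkutsuAux

open OkutsuSetup Polynomial

variable {K : Type} [Field K] [CharZero K] (S : OkutsuSetup K)

local notation "KB" => AlgebraicClosure K

lemma v_zero : S.v 0 = ⊤ := (S.v_eq_top_iff 0).mpr rfl

lemma v_ne_top {x : KB} (h : x ≠ 0) : S.v x ≠ ⊤ :=
  fun h' => h ((S.v_eq_top_iff x).mp h')

lemma v_sub_comm (x y : KB) : S.v (x - y) = S.v (y - x) := by
  rw [← S.v_neg (y - x), neg_sub]

lemma v_add_eq_left {x y : KB} (h : S.v x < S.v y) : S.v (x + y) = S.v x := by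
  have hge : S.v x ≤ S.v (x + y) := le_trans (le_min le_rfl h.le) (S.v_min_le_add x y)
  refine le_antisymm ?_ hge
  by_contra hlt
  push_neg at hlt
  have h0 : (x + y) + (-y) = x := by ring
  have h2 := S.v_min_le_add (x + y) (-y)
  rw [S.v_neg, h0] at h2
  exact absurd (lt_of_lt_of_le (lt_min hlt h) h2) (lt_irrefl _)

/-- `v(a - c) ≥ min (v (a-b)) (v (b-c))`. -/
lemma v_sub_triangle (a b c : KB) : min (S.v (a - b)) (S.v (b - c)) ≤ S.v (a - c) := by
  have h0 : (a - b) + (b - c) = a - c := by ring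
  have := S.v_min_le_add (a - b) (b - c)
  rwa [h0] at this

/-- if `v (b - c) > v (a - b)` then `v (a - c) = v (a - b)`. -/
lemma v_sub_eq_left {a b c : KB} (h : S.v (a - b) < S.v (b - c)) :
    S.v (a - c) = S.v (a - b) := by
  have h0 : (a - b) + (b - c) = a - c := by ring
  rw [← h0]
  exact v_add_eq_left S h


lemma v_aut (σ : KB ≃ₐ[K] KB) (x : KB) : S.v (σ x) = S.v x := by
  let e : (⊤ : IntermediateField K KB) ≃ₐ[K] KB := IntermediateField.topEquiv
  let σ' : (⊤ : IntermediateField K KB) ≃ₐ[K] (⊤ : IntermediateField K KB) :=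
    (e.trans σ).trans e.symm
  have h := S.v_aut_invariant ⊤ σ' ⟨x, trivial⟩
  have h1 : ((σ' ⟨x, trivial⟩ : (⊤ : IntermediateField K KB)) : KB) = σ x := by
    show ((e.symm (σ (e ⟨x, trivial⟩)) : (⊤ : IntermediateField K KB)) : KB) = σ x
    have h2 : e (e.symm (σ (e ⟨x, trivial⟩))) = σ (e ⟨x, trivial⟩) :=
      e.apply_symm_apply _
    have h3 : ∀ z : (⊤ : IntermediateField K KB), e z = (z : KB) := fun z => rfl
    rw [h3] at h2
    rw [h2]
    rfl
  rw [h1] at h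
  exact h

lemma v_multiset_prod (s : Multiset KB) : S.v s.prod = (s.map S.v).sum := by
  induction s using Multiset.induction_on with
  | empty => simpa using S.v_one
  | cons a s ih => simp [Multiset.prod_cons, Multiset.map_cons, Multiset.sum_cons, S.v_mul, ih]

lemma v_aeval_eq_sum {p : K[X]} (hp : p.Monic) (x : KB) :
    S.v (Polynomial.aeval x p)
      = ((p.map (algebraMap K KB)).roots.map (fun z => S.v (x - z))).sum := by
  have hmp : (p.map (algebraMap K KB)).Monic := hp.map _
  have hsp : Splits (p.map (algebraMap K KB)) :=
    IsAlgClosed.splits _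
  have heq := hsp.eq_prod_roots_of_monic hmp
  have hev : Polynomial.aeval x p = eval x (p.map (algebraMap K KB)) := by
    rw [aeval_def, eval_map]
  rw [hev]
  conv_lhs => rw [heq]
  rw [eval_multiset_prod, Multiset.map_map, v_multiset_prod, Multiset.map_map]
  congr 1
  apply Multiset.map_congr rfl
  intro z _
  simp


lemma aeval_of_mem_roots {p : K[X]} (hp : p.Monic) {z : KB}
    (hz : z ∈ (p.map (algebraMap K KB)).roots) : Polynomial.aeval z p = 0 := by
  have := (Polynomial.mem_roots'.mp hz).2
  rw [Polynomial.IsRoot] at this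
  rw [aeval_def, Polynomial.eval₂_eq_eval_map]
  exact this

lemma minpoly_eq_of_mem_roots {p : K[X]} (hirr : Irreducible p) (hp : p.Monic) {z : KB}
    (hz : z ∈ (p.map (algebraMap K KB)).roots) : minpoly K z = p :=
  (minpoly.eq_of_irreducible_of_monic hirr (aeval_of_mem_roots hp hz) hp).symm

lemma exists_conj {p : K[X]} (hirr : Irreducible p) (hp : p.Monic) {z z' : KB}
    (hz : z ∈ (p.map (algebraMap K KB)).roots) (hz' : z' ∈ (p.map (algebraMap K KB)).roots) :
    ∃ σ : KB ≃ₐ[K] KB, σ z = z' := by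
  have h1 : minpoly K z' = p := minpoly_eq_of_mem_roots hirr hp hz'
  have h2 : Polynomial.aeval z (minpoly K z') = 0 := by
    rw [h1]; exact aeval_of_mem_roots hp hz
  exact minpoly.exists_algEquiv_of_root (Algebra.IsAlgebraic.isAlgebraic z') h2

lemma v_aeval_conj {p : K[X]} (hirr : Irreducible p) (hp : p.Monic) {z z' : KB}
    (hz : z ∈ (p.map (algebraMap K KB)).roots) (hz' : z' ∈ (p.map (algebraMap K KB)).roots)
    (q : K[X]) : S.v (Polynomial.aeval z q) = S.v (Polynomial.aeval z' q) := by
  obtain ⟨σ, hσ⟩ := exists_conj hirr hp hz hz'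
  rw [← hσ]
  have h2 : (Polynomial.aeval (σ z)) q = σ ((Polynomial.aeval z) q) := by
    simpa using Polynomial.aeval_algHom_apply (σ : KB →ₐ[K] KB) z q
  rw [h2, v_aut]

lemma sum_swap (s t : Multiset KB) (f : KB → KB → WithTop ℚ) :
    (s.map (fun z => (t.map (f z)).sum)).sum
      = (t.map (fun w => (s.map (fun z => f z w)).sum)).sum := by
  induction s using Multiset.induction_on with
  | empty => simp
  | cons a s ih =>
      simp only [Multiset.map_cons, Multiset.sum_cons, ih, ← Multiset.sum_map_add]

lemma sum_ne_top {s : Multiset KB} {f : KB → WithTop ℚ} (h : ∀ x ∈ s, f x ≠ ⊤) :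
    (s.map f).sum ≠ ⊤ := by
  induction s using Multiset.induction_on with
  | empty => simp
  | cons a s ih =>
      simp only [Multiset.map_cons, Multiset.sum_cons, Ne, WithTop.add_eq_top, not_or]
      exact ⟨h a (Multiset.mem_cons_self a s),
        ih fun x hx => h x (Multiset.mem_cons_of_mem hx)⟩

lemma nsmul_coe (k : ℕ) (q : ℚ) : k • ((q : WithTop ℚ)) = (((k : ℚ) * q : ℚ) : WithTop ℚ) := by
  induction k with
  | zero => simp
  | succ k ih =>
      rw [succ_nsmul, ih, ← WithTop.coe_add]
      congr 1
      push_cast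
      ring

lemma nsmul_top {k : ℕ} (hk : k ≠ 0) : k • (⊤ : WithTop ℚ) = ⊤ := by
  cases k with
  | zero => exact absurd rfl hk
  | succ k => rw [succ_nsmul, add_top]

lemma nsmul_cancel {k : ℕ} (hk : k ≠ 0) {x y : WithTop ℚ} (h : k • x = k • y) : x = y := by
  cases x with
  | top =>
      cases y with
      | top => rfl
      | coe q =>
          rw [nsmul_coe, nsmul_top hk] at h
          exact absurd h.symm (WithTop.coe_ne_top)
  | coe p =>
      cases y with
      | top =>
          rw [nsmul_coe, nsmul_top hk] at h
          exact absurd h (WithTop.coe_ne_top)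
      | coe q =>
          rw [nsmul_coe, nsmul_coe] at h
          have h2 := WithTop.coe_injective h
          have hk' : (k : ℚ) ≠ 0 := by exact_mod_cast hk
          have := mul_left_cancel₀ hk' h2
          exact_mod_cast this


lemma key_swap {p q : K[X]} (hp : p.Monic) (hq : q.Monic) :
    ((p.map (algebraMap K KB)).roots.map (fun z => S.v (Polynomial.aeval z q))).sum
      = ((q.map (algebraMap K KB)).roots.map (fun w => S.v (Polynomial.aeval w p))).sum := by
  have h1 : ((p.map (algebraMap K KB)).roots.map (fun z => S.v (Polynomial.aeval z q))).sum
      = ((p.map (algebraMap K KB)).roots.map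
          (fun z => (((q.map (algebraMap K KB)).roots).map
            (fun w => S.v (z - w))).sum)).sum := by
    congr 1
    exact Multiset.map_congr rfl (fun z _ => v_aeval_eq_sum S hq z)
  have h2 : ((q.map (algebraMap K KB)).roots.map (fun w => S.v (Polynomial.aeval w p))).sum
      = ((q.map (algebraMap K KB)).roots.map
          (fun w => (((p.map (algebraMap K KB)).roots).map
            (fun z => S.v (z - w))).sum)).sum := by
    congr 1
    refine Multiset.map_congr rfl (fun w _ => ?_)
    rw [v_aeval_eq_sum S hp w]
    congr 1
    exact Multiset.map_congr rfl (fun z _ => v_sub_comm S w z)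
  rw [h1, h2, sum_swap]

lemma sum_map_const {s : Multiset KB} {f : KB → WithTop ℚ} {c : WithTop ℚ}
    (h : ∀ x ∈ s, f x = c) : (s.map f).sum = (Multiset.card s) • c := by
  rw [Multiset.map_congr rfl h, Multiset.map_const', Multiset.sum_replicate]

lemma mem_roots_of_aeval {p : K[X]} (hp : p.Monic) {z : KB} (h : Polynomial.aeval z p = 0) :
    z ∈ (p.map (algebraMap K KB)).roots := by
  rw [Polynomial.mem_roots']
  refine ⟨(hp.map (algebraMap K KB)).ne_zero, ?_⟩
  rw [Polynomial.IsRoot, ← Polynomial.eval₂_eq_eval_map, ← aeval_def]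
  exact h

lemma card_roots_map {p : K[X]} (hp : p.Monic) :
    Multiset.card (p.map (algebraMap K KB)).roots = p.natDegree := by
  rw [(Polynomial.splits_iff_card_roots).mp
    (IsAlgClosed.splits _),
    hp.natDegree_map]

lemma v_pow (x : KB) (k : ℕ) : S.v (x ^ k) = k • S.v x := by
  induction k with
  | zero => simpa using S.v_one
  | succ k ih => rw [pow_succ, S.v_mul, ih, succ_nsmul]

lemma le_v_sum {ι : Type} {s : Finset ι} {f : ι → KB} {b : WithTop ℚ}
    (h : ∀ i ∈ s, b ≤ S.v (f i)) : b ≤ S.v (∑ i ∈ s, f i) := by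
  classical
  induction s using Finset.cons_induction with
  | empty => rw [Finset.sum_empty, v_zero]; exact le_top
  | cons a s ha ih =>
      rw [Finset.sum_cons]
      refine le_trans (le_min (h a (Finset.mem_cons_self a s))
        (ih fun i hi => h i (Finset.mem_cons.mpr (Or.inr hi)))) (S.v_min_le_add _ _)

lemma sum_lt_sum {s : Multiset KB} {f g : KB → WithTop ℚ} {a : KB} (ha : a ∈ s)
    (hle : ∀ x ∈ s, f x ≤ g x) (hlt : f a < g a) (hne : ∀ x ∈ s, f x ≠ ⊤) :
    (s.map f).sum < (s.map g).sum := by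
  classical
  obtain ⟨t, rfl⟩ : ∃ t, s = a ::ₘ t := ⟨s.erase a, (Multiset.cons_erase ha).symm⟩
  rw [Multiset.map_cons, Multiset.sum_cons, Multiset.map_cons, Multiset.sum_cons]
  have h1 : (t.map f).sum ≤ (t.map g).sum :=
    Multiset.sum_map_le_sum_map _ _ (fun x hx => hle x (Multiset.mem_cons_of_mem hx))
  have h2 : (t.map f).sum ≠ ⊤ :=
    sum_ne_top (fun x hx => hne x (Multiset.mem_cons_of_mem hx))
  calc f a + (t.map f).sum < g a + (t.map f).sum := WithTop.add_lt_add_right h2 hlt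
    _ ≤ g a + (t.map g).sum := add_le_add_right h1 _

lemma v_root_nonneg {g : Polynomial S.integers} (hg : g.Monic) {a : KB}
    (ha : Polynomial.aeval a (Polynomial.map S.integers.subtype g) = 0) : 0 ≤ S.v a := by
  by_contra hneg
  push_neg at hneg
  set gK := g.map S.integers.subtype with hgK
  have hgKm : gK.Monic := hg.map _
  have hd1 : 1 ≤ gK.natDegree := by
    by_contra h0
    push_neg at h0
    have h00 : gK.natDegree = 0 := by omega
    have : gK = 1 := hgKm.natDegree_eq_zero.mp h00
    rw [this] at ha
    simp at ha
  obtain ⟨q, hq⟩ : ∃ q : ℚ, S.v a = (q : WithTop ℚ) := by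
    have := ne_top_of_lt hneg
    rcases WithTop.ne_top_iff_exists.mp this with ⟨q, hq⟩
    exact ⟨q, hq.symm⟩
  have hqneg : q < 0 := by
    rw [hq] at hneg
    exact_mod_cast hneg
  set d := gK.natDegree with hdd
  have hsum : (Polynomial.aeval a) gK
      = ∑ i ∈ Finset.range (d + 1), gK.coeff i • a ^ i :=
    Polynomial.aeval_eq_sum_range a
  rw [Finset.sum_range_succ, hgKm.coeff_natDegree, one_smul, ha] at hsum
  have hpow : a ^ d = -∑ i ∈ Finset.range d, gK.coeff i • a ^ i := by
    rw [eq_neg_iff_add_eq_zero, add_comm]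
    exact hsum.symm
  have hv1 : S.v (a ^ d) = (((d : ℚ) * q : ℚ) : WithTop ℚ) := by
    rw [v_pow, hq, nsmul_coe]
  have hv2 : ((((d : ℚ) - 1) * q : ℚ) : WithTop ℚ)
      ≤ S.v (∑ i ∈ Finset.range d, gK.coeff i • a ^ i) := by
    apply le_v_sum
    intro i hi
    have hva : S.v (gK.coeff i • a ^ i)
        = S.v (algebraMap K KB (gK.coeff i)) + S.v (a ^ i) := by
      rw [Algebra.smul_def, S.v_mul]
    have hc : (0 : WithTop ℚ) ≤ S.v (algebraMap K KB (gK.coeff i)) := by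
      rw [hgK, Polynomial.coeff_map]
      exact (g.coeff i).2
    have hpi : S.v (a ^ i) = (((i : ℚ) * q : ℚ) : WithTop ℚ) := by
      rw [v_pow, hq, nsmul_coe]
    rw [hva, hpi]
    calc ((((d : ℚ) - 1) * q : ℚ) : WithTop ℚ) ≤ (((i : ℚ) * q : ℚ) : WithTop ℚ) := by
          apply WithTop.coe_le_coe.mpr
          apply mul_le_mul_of_nonpos_right _ hqneg.le
          have hilt : i < d := Finset.mem_range.mp hi
          have : (i : ℚ) + 1 ≤ (d : ℚ) := by exact_mod_cast hilt
          linarith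
      _ = 0 + (((i : ℚ) * q : ℚ) : WithTop ℚ) := by rw [zero_add]
      _ ≤ S.v (algebraMap K KB (gK.coeff i)) + (((i : ℚ) * q : ℚ) : WithTop ℚ) :=
          add_le_add_left hc _
  have hcontra : S.v (a ^ d) = S.v (∑ i ∈ Finset.range d, gK.coeff i • a ^ i) := by
    rw [hpow, S.v_neg]
  rw [hv1] at hcontra
  rw [← hcontra] at hv2
  have hq2 : ((d : ℚ) - 1) * q ≤ (d : ℚ) * q := WithTop.coe_le_coe.mp hv2
  have hq3 : (d : ℚ) * q < ((d : ℚ) - 1) * q :=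
    mul_lt_mul_of_neg_right (by linarith) hqneg
  linarith


lemma cross {p q : K[X]} (hpirr : Irreducible p) (hpm : p.Monic)
    (hqirr : Irreducible q) (hqm : q.Monic) {x w : KB}
    (hx : x ∈ (p.map (algebraMap K KB)).roots)
    (hw : w ∈ (q.map (algebraMap K KB)).roots) :
    p.natDegree • S.v (Polynomial.aeval x q) = q.natDegree • S.v (Polynomial.aeval w p) := by
  have h1 : ((p.map (algebraMap K KB)).roots.map (fun z => S.v (Polynomial.aeval z q))).sum
      = p.natDegree • S.v (Polynomial.aeval x q) := by
    rw [sum_map_const (fun z hz => v_aeval_conj S hpirr hpm hz hx q), card_roots_map hpm]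
  have h2 : ((q.map (algebraMap K KB)).roots.map (fun z => S.v (Polynomial.aeval z p))).sum
      = q.natDegree • S.v (Polynomial.aeval w p) := by
    rw [sum_map_const (fun z hz => v_aeval_conj S hqirr hqm hz hw p), card_roots_map hqm]
  rw [← h1, ← h2, key_swap S hpm hqm]

end OkutsuAux

open OkutsuSetup in
/-- Let `F ∈ 𝓞[x]` be monic irreducible of degree `n` with root `θ`,
of depth `r`, with Okutsu invariants `m_i, μ_i` and an Okutsu frame whose last polynomial
is `F_r` (with the convention `F_0 = 1`).  For `φ ∈ 𝓞[x]` the following are equivalent: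
(i) `φ` is monic irreducible of degree `n` with a root `α` such that `v(θ - α) > μ_r`;
(ii) `φ` is monic irreducible of degree `n` and `v(φ(θ)) > (n/m_r)·v(F_r(θ))`. -/
theorem okutsu_stmt_16 {K : Type} [Field K] [CharZero K] (S : OkutsuSetup K)
    (F : Polynomial S.integers) (hFmonic : F.Monic)
    (hFirr : Irreducible (F.map S.integers.subtype))
    (n : ℕ) (hFdeg : F.natDegree = n)
    (θ : AlgebraicClosure K) (hθ : S.evalK F θ = 0)
    (D : OkutsuData S θ n)
    (Fr : ℕ → Polynomial S.integers) (hFr : S.IsFrame D Fr)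
    (hFr0 : Fr 0 = 1)
    (φ : Polynomial S.integers) :
    (φ.Monic ∧ Irreducible (φ.map S.integers.subtype) ∧ φ.natDegree = n ∧
      ∃ α : AlgebraicClosure K, S.evalK φ α = 0 ∧ D.μ D.r < S.v (θ - α)) ↔
    (φ.Monic ∧ Irreducible (φ.map S.integers.subtype) ∧ φ.natDegree = n ∧
      ∀ c : ℚ, S.v (S.evalK (Fr D.r) θ) = (c : WithTop ℚ) →
        ((((n : ℚ) / (D.m D.r : ℚ)) * c : ℚ) : WithTop ℚ) < S.v (S.evalK φ θ)) := by
  classical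
  have hθae : Polynomial.aeval θ (F.map S.integers.subtype) = 0 := hθ
  set FK : Polynomial K := F.map S.integers.subtype with hFKdef
  have hFKm : FK.Monic := hFmonic.map _
  have hθroot : θ ∈ (FK.map (algebraMap K (AlgebraicClosure K))).roots :=
    OkutsuAux.mem_roots_of_aeval hFKm hθae
  have hminθ : minpoly K θ = FK := OkutsuAux.minpoly_eq_of_mem_roots hFirr hFKm hθroot
  have hFKdeg : FK.natDegree = n := by rw [hFmonic.natDegree_map]; exact hFdeg
  have hn1 : 1 ≤ n := by
    rw [← hFKdeg, ← hminθ]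
    exact minpoly.natDegree_pos (Algebra.IsIntegral.isIntegral θ)
  have H1 : ∀ η : (AlgebraicClosure K), D.μ D.r < S.v (θ - η) → n ≤ (minpoly K η).natDegree := by
    intro η hη
    have hLB := (D.m_isLeast (D.r + 1) (by omega) le_rfl).2
    have := hLB ⟨η, rfl, by simpa using hη⟩
    rwa [D.m_last] at this
  rcases Nat.eq_zero_or_pos D.r with hr0 | hr1
  · -- depth 0 case
    have hμ0 : D.μ D.r = 0 := by rw [hr0, D.mu_zero]
    have hm0 : D.m D.r = 1 := by rw [hr0, D.m_zero]
    have hFr0v : S.evalK (Fr D.r) θ = 1 := by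
      rw [hr0, hFr0]
      show Polynomial.aeval θ ((1 : Polynomial S.integers).map S.integers.subtype) = 1
      rw [Polynomial.map_one, map_one]
    constructor
    · rintro ⟨h1, h2, h3, α, hα, hαv⟩
      refine ⟨h1, h2, h3, ?_⟩
      intro c hc
      rw [hFr0v, S.v_one] at hc
      have hc0 : c = 0 := by exact_mod_cast hc.symm
      subst hc0
      rw [hm0]
      norm_num
      -- goal : 0 < S.v (S.evalK φ θ)
      set φK : Polynomial K := φ.map S.integers.subtype with hφKdef
      have hφKm : φK.Monic := h1.map _
      have hαroot : α ∈ (φK.map (algebraMap K (AlgebraicClosure K))).roots :=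
        OkutsuAux.mem_roots_of_aeval hφKm hα
      have hev : S.v (S.evalK φ θ)
          = ((φK.map (algebraMap K (AlgebraicClosure K))).roots.map (fun w => S.v (θ - w))).sum :=
        OkutsuAux.v_aeval_eq_sum S hφKm θ
      rw [hev]
      have hzero : (((φK.map (algebraMap K (AlgebraicClosure K))).roots.map
          (fun _ : (AlgebraicClosure K) => (0 : WithTop ℚ))).sum) = 0 := by
        rw [OkutsuAux.sum_map_const (fun x _ => rfl), smul_zero]
      calc (0 : WithTop ℚ)
          = (((φK.map (algebraMap K (AlgebraicClosure K))).roots.map (fun _ : (AlgebraicClosure K) => (0 : WithTop ℚ))).sum) :=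
            hzero.symm
        _ < ((φK.map (algebraMap K (AlgebraicClosure K))).roots.map (fun w => S.v (θ - w))).sum := by
            apply OkutsuAux.sum_lt_sum hαroot
            · intro w hw
              have hθ0 : 0 ≤ S.v θ := OkutsuAux.v_root_nonneg S hFmonic hθae
              have hw0 : 0 ≤ S.v w :=
                OkutsuAux.v_root_nonneg S h1 (OkutsuAux.aeval_of_mem_roots hφKm hw)
              have htri := S.v_min_le_add θ (-w)
              rw [S.v_neg] at htri
              rw [sub_eq_add_neg]
              exact le_trans (le_min hθ0 hw0) htri
            · rw [← hμ0]; exact hαv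
            · intro w hw; exact WithTop.zero_ne_top
    · rintro ⟨h1, h2, h3, h4⟩
      refine ⟨h1, h2, h3, ?_⟩
      by_contra hno
      push_neg at hno
      set φK : Polynomial K := φ.map S.integers.subtype with hφKdef
      have hφKm : φK.Monic := h1.map _
      have hlt := h4 0 (by rw [hFr0v, S.v_one]; norm_num)
      rw [hm0] at hlt
      norm_num at hlt
      -- hlt : 0 < S.v (S.evalK φ θ)
      have hev : S.v (S.evalK φ θ)
          = ((φK.map (algebraMap K (AlgebraicClosure K))).roots.map (fun w => S.v (θ - w))).sum :=
        OkutsuAux.v_aeval_eq_sum S hφKm θ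
      have hle : ((φK.map (algebraMap K (AlgebraicClosure K))).roots.map (fun w => S.v (θ - w))).sum
          ≤ (((φK.map (algebraMap K (AlgebraicClosure K))).roots.map (fun _ : (AlgebraicClosure K) => (0 : WithTop ℚ))).sum) := by
        apply Multiset.sum_map_le_sum_map
        intro w hw
        have := hno w (OkutsuAux.aeval_of_mem_roots hφKm hw)
        rwa [hμ0] at this
      rw [OkutsuAux.sum_map_const (fun x _ => rfl), smul_zero] at hle
      rw [hev] at hlt
      exact absurd (lt_of_lt_of_le hlt hle) (lt_irrefl _)
  · -- depth ≥ 1 case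
    obtain ⟨αr, hαrdeg, hαrv, hαrmin⟩ := hFr D.r hr1 le_rfl
    have hαrint : IsIntegral K αr := Algebra.IsIntegral.isIntegral αr
    set Gr : Polynomial K := (Fr D.r).map S.integers.subtype with hGrdef
    have hGr : Gr = minpoly K αr := hαrmin
    have hGrm : Gr.Monic := by rw [hGr]; exact minpoly.monic hαrint
    have hGrirr : Irreducible Gr := by rw [hGr]; exact minpoly.irreducible hαrint
    have hGrdeg : Gr.natDegree = D.m D.r := by rw [hGr]; exact hαrdeg
    have hmrn : D.m D.r < n := D.m_lt_n D.r hr1 le_rfl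
    have hmr1 : 1 ≤ D.m D.r := by
      rw [← hGrdeg, hGr]
      exact minpoly.natDegree_pos hαrint
    have hθαr : θ ≠ αr := by
      intro h
      rw [← h, hminθ, hFKdeg] at hαrdeg
      omega
    have hμfin : D.μ D.r ≠ ⊤ := by
      rw [← hαrv]
      exact OkutsuAux.v_ne_top S (sub_ne_zero.mpr hθαr)
    have hαr_root : αr ∈ (Gr.map (algebraMap K (AlgebraicClosure K))).roots :=
      OkutsuAux.mem_roots_of_aeval hGrm (by rw [hGr]; exact minpoly.aeval K αr)
    set Froots := (FK.map (algebraMap K (AlgebraicClosure K))).roots with hFrootsdef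
    have hαrz : ∀ z ∈ Froots, S.v (αr - z) = min (S.v (θ - z)) (D.μ D.r) := by
      intro z hz
      have ha : S.v (αr - z) ≤ D.μ D.r := by
        by_contra hcon
        push_neg at hcon
        obtain ⟨σ, hσ⟩ := OkutsuAux.exists_conj hFirr hFKm hz hθroot
        have h5 : S.v (σ (αr - z)) = S.v (αr - z) := OkutsuAux.v_aut S σ _
        rw [map_sub, hσ] at h5
        have h6 : D.μ D.r < S.v (θ - σ αr) := by
          rw [OkutsuAux.v_sub_comm S θ (σ αr), h5]
          exact hcon
        have h7 := H1 _ h6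
        rw [minpoly.algEquiv_eq σ αr, hαrdeg] at h7
        omega
      refine le_antisymm (le_min ?_ ha) ?_
      · by_contra hcon
        push_neg at hcon
        have htri := OkutsuAux.v_sub_triangle S θ αr z
        rw [hαrv] at htri
        rcases le_total (D.μ D.r) (S.v (αr - z)) with hc | hc
        · rw [min_eq_left hc] at htri
          exact absurd (lt_of_le_of_lt (le_trans ha htri) hcon) (lt_irrefl _)
        · rw [min_eq_right hc] at htri
          exact absurd (lt_of_le_of_lt htri hcon) (lt_irrefl _)
      · have htri := OkutsuAux.v_sub_triangle S αr θ z
        rw [OkutsuAux.v_sub_comm S αr θ, hαrv, min_comm] at htri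
        exact htri
    have hVsum : S.v (Polynomial.aeval αr FK)
        = (Froots.map (fun z => S.v (αr - z))).sum :=
      OkutsuAux.v_aeval_eq_sum S hFKm αr
    have hGrθ : Polynomial.aeval θ Gr ≠ 0 := by
      intro h
      have h9 := OkutsuAux.minpoly_eq_of_mem_roots hGrirr hGrm
        (OkutsuAux.mem_roots_of_aeval hGrm h)
      rw [hminθ] at h9
      have h10 := congrArg Polynomial.natDegree h9
      rw [hFKdeg, hGrdeg] at h10
      omega
    have hevalFr : S.evalK (Fr D.r) θ = Polynomial.aeval θ Gr := rfl
    have hcross := OkutsuAux.cross S hFirr hFKm hGrirr hGrm hθroot hαr_root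
    rw [hFKdeg, hGrdeg] at hcross
    have hVval : ∀ c : ℚ, S.v (Polynomial.aeval θ Gr) = (c : WithTop ℚ) →
        S.v (Polynomial.aeval αr FK)
          = ((((n : ℚ) / (D.m D.r : ℚ)) * c : ℚ) : WithTop ℚ) := by
      intro c hc
      rw [hc, OkutsuAux.nsmul_coe] at hcross
      have hVne : S.v (Polynomial.aeval αr FK) ≠ ⊤ := by
        intro h
        rw [h, OkutsuAux.nsmul_top (by omega)] at hcross
        exact absurd hcross WithTop.coe_ne_top
      obtain ⟨vq, hvq⟩ := WithTop.ne_top_iff_exists.mp hVne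
      rw [← hvq, OkutsuAux.nsmul_coe] at hcross
      have h8 : (n : ℚ) * c = (D.m D.r : ℚ) * vq := WithTop.coe_injective hcross
      rw [← hvq]
      have hm0 : (D.m D.r : ℚ) ≠ 0 := by
        have : D.m D.r ≠ 0 := by omega
        exact_mod_cast this
      have : vq = (n : ℚ) / (D.m D.r : ℚ) * c := by
        field_simp
        linarith
      rw [this]
    constructor
    · rintro ⟨h1, h2, h3, α, hα, hαv⟩
      refine ⟨h1, h2, h3, ?_⟩
      intro c hc
      rw [hevalFr] at hc
      have hV := hVval c hc
      set φK : Polynomial K := φ.map S.integers.subtype with hφKdef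
      have hφKm : φK.Monic := h1.map _
      have hφKdeg : φK.natDegree = n := by rw [h1.natDegree_map]; exact h3
      have hα_root : α ∈ (φK.map (algebraMap K (AlgebraicClosure K))).roots :=
        OkutsuAux.mem_roots_of_aeval hφKm hα
      have hsym := OkutsuAux.cross S hFirr hFKm h2 hφKm hθroot hα_root
      rw [hFKdeg, hφKdeg] at hsym
      have hφθ : S.v (Polynomial.aeval θ φK) = S.v (Polynomial.aeval α FK) :=
        OkutsuAux.nsmul_cancel (by omega) hsym
      have hαsum : S.v (Polynomial.aeval α FK)
          = (Froots.map (fun z => S.v (α - z))).sum :=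
        OkutsuAux.v_aeval_eq_sum S hFKm α
      have hlt : (Froots.map (fun z => S.v (αr - z))).sum
          < (Froots.map (fun z => S.v (α - z))).sum := by
        apply OkutsuAux.sum_lt_sum hθroot
        · intro z hz
          rw [hαrz z hz]
          have htri := OkutsuAux.v_sub_triangle S α θ z
          refine le_trans (le_min ?_ ?_) htri
          · refine le_trans (min_le_right _ _) ?_
            rw [OkutsuAux.v_sub_comm S α θ]
            exact hαv.le
          · exact min_le_left _ _
        · rw [hαrz θ hθroot]
          have h11 : S.v (θ - θ) = ⊤ := by rw [sub_self]; exact OkutsuAux.v_zero S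
          rw [h11, min_eq_right le_top, OkutsuAux.v_sub_comm S α θ]
          exact hαv
        · intro z hz
          rw [hαrz z hz]
          intro htop
          apply hμfin
          have h12 := min_le_right (S.v (θ - z)) (D.μ D.r)
          rw [htop] at h12
          exact top_le_iff.mp h12
      rw [← hVsum, hV] at hlt
      show ((((n : ℚ) / (D.m D.r : ℚ)) * c : ℚ) : WithTop ℚ) < S.v (S.evalK φ θ)
      have h13 : S.v (S.evalK φ θ) = S.v (Polynomial.aeval θ φK) := rfl
      rw [h13, hφθ, hαsum]
      exact hlt
    · rintro ⟨h1, h2, h3, h4⟩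
      refine ⟨h1, h2, h3, ?_⟩
      by_contra hno
      push_neg at hno
      set φK : Polynomial K := φ.map S.integers.subtype with hφKdef
      have hφKm : φK.Monic := h1.map _
      have hφKdeg : φK.natDegree = n := by rw [h1.natDegree_map]; exact h3
      obtain ⟨c, hc⟩ := WithTop.ne_top_iff_exists.mp (OkutsuAux.v_ne_top S hGrθ)
      have hlt := h4 c (by rw [hevalFr]; exact hc.symm)
      have hV := hVval c hc.symm
      have hs_ne : (φK.map (algebraMap K (AlgebraicClosure K))).roots ≠ 0 := by
        intro h
        have h14 := OkutsuAux.card_roots_map hφKm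
        rw [h, hφKdeg] at h14
        simp at h14
        omega
      obtain ⟨α, hαmem', hαmax'⟩ := Finset.exists_max_image
        (φK.map (algebraMap K (AlgebraicClosure K))).roots.toFinset
        (fun a => S.v (θ - a)) (Multiset.toFinset_nonempty.mpr hs_ne)
      have hαmem := Multiset.mem_toFinset.mp hαmem'
      have hαmax : ∀ a ∈ (φK.map (algebraMap K (AlgebraicClosure K))).roots,
          S.v (θ - a) ≤ S.v (θ - α) :=
        fun a ha => hαmax' a (Multiset.mem_toFinset.mpr ha)
      have hterm : ∀ z ∈ Froots, S.v (α - z) ≤ S.v (αr - z) := by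
        intro z hz
        rw [hαrz z hz]
        by_contra hcon
        push_neg at hcon
        obtain ⟨σ, hσ⟩ := OkutsuAux.exists_conj hFirr hFKm hz hθroot
        have hσαroot : σ α ∈ (φK.map (algebraMap K (AlgebraicClosure K))).roots := by
          apply OkutsuAux.mem_roots_of_aeval hφKm
          have h15 : Polynomial.aeval (σ α) φK = σ (Polynomial.aeval α φK) := by
            simpa using Polynomial.aeval_algHom_apply
              (σ : AlgebraicClosure K →ₐ[K] AlgebraicClosure K) α φK
          rw [h15, OkutsuAux.aeval_of_mem_roots hφKm hαmem, map_zero]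
        have h6 : S.v (θ - σ α) = S.v (α - z) := by
          rw [← hσ, ← map_sub, OkutsuAux.v_aut, OkutsuAux.v_sub_comm]
        rcases le_total (S.v (θ - z)) (D.μ D.r) with hc1 | hc1
        · rw [min_eq_left hc1] at hcon
          have hθα : S.v (θ - α) = S.v (θ - z) := by
            apply OkutsuAux.v_sub_eq_left
            rw [OkutsuAux.v_sub_comm S z α]
            exact hcon
          have h16 := hαmax (σ α) hσαroot
          rw [h6, hθα] at h16
          exact absurd (lt_of_lt_of_le hcon h16) (lt_irrefl _)
        · rw [min_eq_right hc1] at hcon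
          have h17 := hno (σ α) (OkutsuAux.aeval_of_mem_roots hφKm hσαroot)
          rw [h6] at h17
          exact absurd (lt_of_lt_of_le hcon h17) (lt_irrefl _)
      have hle : (Froots.map (fun z => S.v (α - z))).sum
          ≤ (Froots.map (fun z => S.v (αr - z))).sum :=
        Multiset.sum_map_le_sum_map _ _ hterm
      have hsym := OkutsuAux.cross S hFirr hFKm h2 hφKm hθroot hαmem
      rw [hFKdeg, hφKdeg] at hsym
      have hφθ : S.v (Polynomial.aeval θ φK) = S.v (Polynomial.aeval α FK) :=
        OkutsuAux.nsmul_cancel (by omega) hsym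
      have hαsum : S.v (Polynomial.aeval α FK)
          = (Froots.map (fun z => S.v (α - z))).sum :=
        OkutsuAux.v_aeval_eq_sum S hFKm α
      have hfinal : S.v (S.evalK φ θ)
          ≤ ((((n : ℚ) / (D.m D.r : ℚ)) * c : ℚ) : WithTop ℚ) := by
        calc S.v (S.evalK φ θ) = S.v (Polynomial.aeval α FK) := hφθ
          _ = (Froots.map (fun z => S.v (α - z))).sum := hαsum
          _ ≤ (Froots.map (fun z => S.v (αr - z))).sum := hle
          _ = S.v (Polynomial.aeval αr FK) := hVsum.symm
          _ = ((((n : ℚ) / (D.m D.r : ℚ)) * c : ℚ) : WithTop ℚ) := hV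
      exact absurd hlt (not_lt.mpr hfinal)
end
end
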